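/- arXiv:1405.4569 — 5 statements merged into one kernel-verified Lean document; each statement's English description precedes it below -/
import Mathlib

section
/- Existence, explicit form, and exponential decay of the topologically protected zero mode of the 1D Dirac operator. Let λ, θ be nonzero real numbers and let κ : ℝ → ℝ be continuous and bounded, with nonzero constants κ_{+∞}, κ_{−∞} satisfying κ_{+∞}·κ_{−∞} > 0, such that X ↦ κ(X) − κ_{+∞} is integrable on [0, ∞) and X ↦ κ(X) + κ_{−∞} is integrable on (−∞, 0]. Define α⋆ : ℝ → ℂ² by α⋆(X) = (1, i)ᵀ exp(−(θ/λ) ∫₀^X κ(s) ds) if θκ_{+∞}/λ > 0, and α⋆(X) = (1, −i)ᵀ exp((θ/λ) ∫₀^X κ(s) ds) if θκ_{+∞}/λ < 0. Then α⋆ is continuously differentiable, satisfies iλσ₃α⋆′(X) + θκ(X)σ₁α⋆(X) = 0 for all X ∈ ℝ, and there exist constants C, c > 0 such that |α⋆(X)|_{ℂ²} ≤ C e^{−c|X|} for all X ∈ ℝ; in particular α⋆ ∈ L²(ℝ, ℂ²) and α⋆(X) → 0 as X → ±∞. -/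
open MeasureTheory Filter

lemma integrable_exp_neg_abs' {b : ℝ} (hb : 0 < b) :
    Integrable (fun x : ℝ => Real.exp (-b * |x|)) volume := by
  have hIoi : IntegrableOn (fun x : ℝ => Real.exp (-b * |x|)) (Set.Ioi 0) := by
    refine (exp_neg_integrableOn_Ioi 0 hb).congr_fun (fun x hx => ?_) measurableSet_Ioi
    rw [abs_of_pos hx]
  have hIic : IntegrableOn (fun x : ℝ => Real.exp (-b * |x|)) (Set.Iic 0) := by
    rw [← Measure.map_neg_eq_self (volume : Measure ℝ)]
    have m : MeasurableEmbedding fun x : ℝ => -x :=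
      (Homeomorph.neg ℝ).measurableEmbedding
    rw [m.integrableOn_map_iff]
    simp_rw [Function.comp_def, abs_neg, Set.neg_preimage, Set.neg_Iic, neg_zero]
    exact Iff.mpr integrableOn_Ici_iff_integrableOn_Ioi hIoi
  have := hIic.union hIoi
  rwa [Set.Iic_union_Ioi, integrableOn_univ] at this

/-- Existence, explicit form, and exponential decay of the topologically protected
zero mode of the 1D Dirac operator. -/
theorem dirac_zero_mode_existence
    (lam θ : ℝ) (hlam : lam ≠ 0) (hθ : θ ≠ 0)
    (κ : ℝ → ℝ) (hκc : Continuous κ) (hκb : ∃ M : ℝ, ∀ X, |κ X| ≤ M)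
    (κp κm : ℝ) (hκp : κp ≠ 0) (hκm : κm ≠ 0) (hsign : 0 < κp * κm)
    (hintp : IntegrableOn (fun X => κ X - κp) (Set.Ici (0 : ℝ)))
    (hintm : IntegrableOn (fun X => κ X + κm) (Set.Iic (0 : ℝ)))
    (α₁ α₂ : ℝ → ℂ)
    (hα₁ : ∀ X : ℝ, α₁ X = if 0 < θ * κp / lam
        then ((Real.exp (-(θ / lam) * ∫ s in (0:ℝ)..X, κ s) : ℝ) : ℂ)
        else ((Real.exp ((θ / lam) * ∫ s in (0:ℝ)..X, κ s) : ℝ) : ℂ))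
    (hα₂ : ∀ X : ℝ, α₂ X = if 0 < θ * κp / lam
        then Complex.I * α₁ X else -Complex.I * α₁ X) :
    ContDiff ℝ 1 α₁ ∧ ContDiff ℝ 1 α₂ ∧
    (∀ X : ℝ, Complex.I * (lam : ℂ) * deriv α₁ X + (θ : ℂ) * (κ X : ℂ) * α₂ X = 0) ∧
    (∀ X : ℝ, -(Complex.I * (lam : ℂ)) * deriv α₂ X + (θ : ℂ) * (κ X : ℂ) * α₁ X = 0) ∧
    (∃ C > (0:ℝ), ∃ c > (0:ℝ), ∀ X : ℝ,
      ‖α₁ X‖ ≤ C * Real.exp (-c * |X|) ∧ ‖α₂ X‖ ≤ C * Real.exp (-c * |X|)) ∧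
    MemLp α₁ 2 (volume : Measure ℝ) ∧ MemLp α₂ 2 (volume : Measure ℝ) ∧
    Tendsto α₁ atTop (nhds 0) ∧ Tendsto α₁ atBot (nhds 0) ∧
    Tendsto α₂ atTop (nhds 0) ∧ Tendsto α₂ atBot (nhds 0) := by
  classical
  set F : ℝ → ℝ := fun X => ∫ s in (0:ℝ)..X, κ s with hFdef
  have hF : ∀ X : ℝ, HasDerivAt F (κ X) X :=
    fun X => (hκc.integral_hasStrictDerivAt 0 X).hasDerivAt
  set ε : ℝ := if 0 < θ * κp / lam then -(θ / lam) else θ / lam with hεdef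
  set ι : ℂ := if 0 < θ * κp / lam then Complex.I else -Complex.I with hιdef
  have hα₁' : ∀ X, α₁ X = ((Real.exp (ε * F X) : ℝ) : ℂ) := by
    intro X
    by_cases h : 0 < θ * κp / lam
    · rw [hα₁ X, if_pos h, hεdef, if_pos h]
    · rw [hα₁ X, if_neg h, hεdef, if_neg h]
  have hα₂' : ∀ X, α₂ X = ι * α₁ X := by
    intro X
    by_cases h : 0 < θ * κp / lam
    · rw [hα₂ X, if_pos h, hιdef, if_pos h]
    · rw [hα₂ X, if_neg h, hιdef, if_neg h]
  have hεκp : ε * κp < 0 := by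
    by_cases h : 0 < θ * κp / lam
    · rw [hεdef, if_pos h]
      have h2 : -(θ / lam) * κp = -(θ * κp / lam) := by ring
      rw [h2]; linarith
    · have h0 : θ * κp / lam ≠ 0 := div_ne_zero (mul_ne_zero hθ hκp) hlam
      have h1 : θ * κp / lam < 0 := lt_of_le_of_ne (not_lt.mp h) h0
      rw [hεdef, if_neg h]
      have h2 : θ / lam * κp = θ * κp / lam := by ring
      rw [h2]; exact h1
  have hεκm : ε * κm < 0 := by
    have hkpq : 0 < κm / κp := by
      rcases lt_or_gt_of_ne hκp with hp | hp
      · have hm : κm < 0 := by nlinarith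
        exact div_pos_of_neg_of_neg hm hp
      · have hm : 0 < κm := by nlinarith
        exact div_pos hm hp
    have h2 : ε * κm = (ε * κp) * (κm / κp) := by field_simp
    rw [h2]
    exact mul_neg_of_neg_of_pos hεκp hkpq
  have hιnorm : ‖ι‖ = 1 := by
    rw [hιdef]; split_ifs <;> simp
  have hlc : (lam : ℂ) ≠ 0 := Complex.ofReal_ne_zero.mpr hlam
  have hA : Complex.I * (lam:ℂ) * (ε:ℂ) + (θ:ℂ) * ι = 0 := by
    by_cases h : 0 < θ * κp / lam
    · rw [hεdef, hιdef, if_pos h, if_pos h]; push_cast; field_simp; ring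
    · rw [hεdef, hιdef, if_neg h, if_neg h]; push_cast; field_simp; ring
  have hB : Complex.I * (lam:ℂ) * ι * (ε:ℂ) = (θ:ℂ) := by
    by_cases h : 0 < θ * κp / lam
    · rw [hεdef, hιdef, if_pos h, if_pos h]; push_cast; field_simp
      first
      | linear_combination ((lam:ℂ)*(θ:ℂ)) * Complex.I_sq
      | linear_combination (-((lam:ℂ)*(θ:ℂ))) * Complex.I_sq
      | linear_combination (2*(lam:ℂ)*(θ:ℂ)) * Complex.I_sq
      | linear_combination (-(2*(lam:ℂ)*(θ:ℂ))) * Complex.I_sq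
      | linear_combination (-(θ:ℂ)) * Complex.I_sq
    · rw [hεdef, hιdef, if_neg h, if_neg h]; push_cast; field_simp
      first
      | linear_combination ((lam:ℂ)*(θ:ℂ)) * Complex.I_sq
      | linear_combination (-((lam:ℂ)*(θ:ℂ))) * Complex.I_sq
      | linear_combination (2*(lam:ℂ)*(θ:ℂ)) * Complex.I_sq
      | linear_combination (-(2*(lam:ℂ)*(θ:ℂ))) * Complex.I_sq
      | linear_combination (-(θ:ℂ)) * Complex.I_sq
  have hα₁fun : α₁ = fun X => ((Real.exp (ε * F X) : ℝ) : ℂ) := funext hα₁'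
  have hα₂fun : α₂ = fun X => ι * α₁ X := funext hα₂'
  have hd₁ : ∀ X, HasDerivAt α₁ (((ε * κ X : ℝ) : ℂ) * α₁ X) X := by
    intro X
    have h1 : HasDerivAt (fun Y => ε * F Y) (ε * κ X) X := (hF X).const_mul ε
    have h2 := (h1.exp).ofReal_comp
    rw [hα₁fun]
    convert h2 using 1
    push_cast
    ring
  have hd₂ : ∀ X, HasDerivAt α₂ (ι * (((ε * κ X : ℝ) : ℂ) * α₁ X)) X := by
    intro X
    rw [hα₂fun]
    exact (hd₁ X).const_mul ι
  have hdiff₁ : Differentiable ℝ α₁ := fun X => (hd₁ X).differentiableAt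
  have hcont₁ : Continuous α₁ := hdiff₁.continuous
  have hcd₁ : ContDiff ℝ 1 α₁ := by
    rw [contDiff_one_iff_deriv]
    refine ⟨hdiff₁, ?_⟩
    have hderiv₁ : deriv α₁ = fun X => ((ε * κ X : ℝ) : ℂ) * α₁ X :=
      funext fun X => (hd₁ X).deriv
    rw [hderiv₁]
    exact (Complex.continuous_ofReal.comp (continuous_const.mul hκc)).mul hcont₁
  have hcd₂ : ContDiff ℝ 1 α₂ := by
    rw [hα₂fun]; exact contDiff_const.mul hcd₁
  have heq1 : ∀ X : ℝ, Complex.I * (lam : ℂ) * deriv α₁ X + (θ : ℂ) * (κ X : ℂ) * α₂ X = 0 := by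
    intro X
    rw [(hd₁ X).deriv, hα₂' X]
    push_cast
    linear_combination ((κ X : ℂ) * α₁ X) * hA
  have heq2 : ∀ X : ℝ, -(Complex.I * (lam : ℂ)) * deriv α₂ X + (θ : ℂ) * (κ X : ℂ) * α₁ X = 0 := by
    intro X
    rw [(hd₂ X).deriv]
    push_cast
    linear_combination (-((κ X : ℂ) * α₁ X)) * hB
  -- decay estimates
  have hintp' : IntegrableOn (fun X => |κ X - κp|) (Set.Ici (0:ℝ)) := hintp.abs
  have hintm' : IntegrableOn (fun X => |κ X + κm|) (Set.Iic (0:ℝ)) := hintm.abs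
  set Bp : ℝ := ∫ x in Set.Ici (0:ℝ), |κ x - κp| with hBpdef
  set Bm : ℝ := ∫ x in Set.Iic (0:ℝ), |κ x + κm| with hBmdef
  have hBp0 : 0 ≤ Bp := setIntegral_nonneg measurableSet_Ici fun x _ => abs_nonneg _
  have hBm0 : 0 ≤ Bm := setIntegral_nonneg measurableSet_Iic fun x _ => abs_nonneg _
  set c : ℝ := min (-(ε * κp)) (-(ε * κm)) with hcdef
  have hc0 : 0 < c := lt_min (by linarith) (by linarith)
  set A : ℝ := |ε| * Bp + |ε| * Bm with hAdef
  have hεBp : 0 ≤ |ε| * Bp := mul_nonneg (abs_nonneg _) hBp0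
  have hεBm : 0 ≤ |ε| * Bm := mul_nonneg (abs_nonneg _) hBm0
  have key : ∀ X : ℝ, ε * F X ≤ A - c * |X| := by
    intro X
    rcases le_or_gt 0 X with hX | hX
    · have hsub := intervalIntegral.integral_sub (hκc.intervalIntegrable 0 X)
        (intervalIntegrable_const (μ := (volume : Measure ℝ)) (c := κp))
      rw [intervalIntegral.integral_const] at hsub
      have hsplit : F X = (∫ s in (0:ℝ)..X, (κ s - κp)) + κp * X := by
        rw [hsub, hFdef]
        simp only [smul_eq_mul]
        ring
      have hIbound : |∫ s in (0:ℝ)..X, (κ s - κp)| ≤ Bp := by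
        calc |∫ s in (0:ℝ)..X, (κ s - κp)|
            ≤ ∫ s in (0:ℝ)..X, |κ s - κp| :=
              intervalIntegral.abs_integral_le_integral_abs hX
          _ = ∫ s in Set.Ioc 0 X, |κ s - κp| := intervalIntegral.integral_of_le hX
          _ ≤ Bp := by
              refine setIntegral_mono_set hintp'
                (Filter.Eventually.of_forall fun x => abs_nonneg _) ?_
              exact HasSubset.Subset.eventuallyLE (Set.Ioc_subset_Icc_self.trans Set.Icc_subset_Ici_self)
      have h1 : ε * (∫ s in (0:ℝ)..X, (κ s - κp)) ≤ |ε| * Bp := by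
        calc ε * (∫ s in (0:ℝ)..X, (κ s - κp))
            ≤ |ε * (∫ s in (0:ℝ)..X, (κ s - κp))| := le_abs_self _
          _ = |ε| * |∫ s in (0:ℝ)..X, (κ s - κp)| := abs_mul _ _
          _ ≤ |ε| * Bp := mul_le_mul_of_nonneg_left hIbound (abs_nonneg _)
      have hcle : ε * κp ≤ -c := by
        have := min_le_left (-(ε * κp)) (-(ε * κm))
        rw [hcdef]; linarith
      have h2 : ε * (κp * X) ≤ -c * |X| := by
        rw [abs_of_nonneg hX]
        nlinarith
      calc ε * F X = ε * (∫ s in (0:ℝ)..X, (κ s - κp)) + ε * (κp * X) := by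
            rw [hsplit]; ring
        _ ≤ |ε| * Bp + (-c * |X|) := add_le_add h1 h2
        _ ≤ A - c * |X| := by rw [hAdef]; linarith
    · have hX' : X ≤ 0 := le_of_lt hX
      have hadd := intervalIntegral.integral_add (hκc.intervalIntegrable X 0)
        (intervalIntegrable_const (μ := (volume : Measure ℝ)) (c := κm))
      rw [intervalIntegral.integral_const] at hadd
      have h0 : F X = -∫ s in X..(0:ℝ), κ s := by
        show (∫ s in (0:ℝ)..X, κ s) = -∫ s in X..(0:ℝ), κ s
        exact intervalIntegral.integral_symm X 0
      have hsplit : F X = -(∫ s in X..(0:ℝ), (κ s + κm)) - κm * X := by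
        rw [h0]
        have : (∫ s in X..(0:ℝ), κ s) = (∫ s in X..(0:ℝ), (κ s + κm)) - (0 - X) * κm := by
          rw [hadd]; simp only [smul_eq_mul]; ring
        rw [this]; ring
      have hIbound : |∫ s in X..(0:ℝ), (κ s + κm)| ≤ Bm := by
        calc |∫ s in X..(0:ℝ), (κ s + κm)|
            ≤ ∫ s in X..(0:ℝ), |κ s + κm| :=
              intervalIntegral.abs_integral_le_integral_abs hX'
          _ = ∫ s in Set.Ioc X 0, |κ s + κm| := intervalIntegral.integral_of_le hX'
          _ ≤ Bm := by
              refine setIntegral_mono_set hintm'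
                (Filter.Eventually.of_forall fun x => abs_nonneg _) ?_
              exact HasSubset.Subset.eventuallyLE Set.Ioc_subset_Iic_self
      have h1 : ε * (-(∫ s in X..(0:ℝ), (κ s + κm))) ≤ |ε| * Bm := by
        calc ε * (-(∫ s in X..(0:ℝ), (κ s + κm)))
            ≤ |ε * (-(∫ s in X..(0:ℝ), (κ s + κm)))| := le_abs_self _
          _ = |ε| * |∫ s in X..(0:ℝ), (κ s + κm)| := by rw [abs_mul, abs_neg]
          _ ≤ |ε| * Bm := mul_le_mul_of_nonneg_left hIbound (abs_nonneg _)
      have hcle : ε * κm ≤ -c := by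
        have := min_le_right (-(ε * κp)) (-(ε * κm))
        rw [hcdef]; linarith
      have h2 : ε * (-(κm * X)) ≤ -c * |X| := by
        rw [abs_of_neg hX]
        nlinarith
      calc ε * F X = ε * (-(∫ s in X..(0:ℝ), (κ s + κm))) + ε * (-(κm * X)) := by
            rw [hsplit]; ring
        _ ≤ |ε| * Bm + (-c * |X|) := add_le_add h1 h2
        _ ≤ A - c * |X| := by rw [hAdef]; linarith
  have hbound₁ : ∀ X : ℝ, ‖α₁ X‖ ≤ Real.exp A * Real.exp (-c * |X|) := by
    intro X
    rw [hα₁' X, Complex.norm_real, Real.norm_eq_abs, Real.abs_exp, ← Real.exp_add]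
    exact Real.exp_le_exp.mpr (by linarith [key X])
  have hbound₂ : ∀ X : ℝ, ‖α₂ X‖ = ‖α₁ X‖ := fun X => by
    rw [hα₂' X, norm_mul, hιnorm, one_mul]
  have hbound₂' : ∀ X : ℝ, ‖α₂ X‖ ≤ Real.exp A * Real.exp (-c * |X|) := fun X => by
    rw [hbound₂ X]; exact hbound₁ X
  -- L² membership
  have hmeas₁ : AEStronglyMeasurable α₁ (volume : Measure ℝ) := hcont₁.aestronglyMeasurable
  have hexp2 : Integrable (fun x : ℝ => Real.exp (-(2*c) * |x|)) volume :=
    integrable_exp_neg_abs' (by linarith)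
  have hml₁ : MemLp α₁ 2 (volume : Measure ℝ) := by
    rw [memLp_two_iff_integrable_sq_norm hmeas₁]
    refine (hexp2.const_mul ((Real.exp A)^2)).mono
      ((hcont₁.norm.pow 2).aestronglyMeasurable)
      (Filter.Eventually.of_forall fun x => ?_)
    have hsq : Real.exp (-c * |x|) ^ 2 = Real.exp (-(2*c) * |x|) := by
      rw [sq, ← Real.exp_add]; ring_nf
    have h1 : ‖α₁ x‖ ^ 2 ≤ (Real.exp A) ^ 2 * Real.exp (-(2*c) * |x|) := by
      rw [← hsq]
      calc ‖α₁ x‖ ^ 2 ≤ (Real.exp A * Real.exp (-c * |x|)) ^ 2 := by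
            have := hbound₁ x
            have h0 : (0:ℝ) ≤ ‖α₁ x‖ := norm_nonneg _
            nlinarith
        _ = (Real.exp A) ^ 2 * Real.exp (-c * |x|) ^ 2 := by ring
    rw [Real.norm_eq_abs, Real.norm_eq_abs, abs_of_nonneg (by positivity),
      abs_of_nonneg (by positivity)]
    exact h1
  have hml₂ : MemLp α₂ 2 (volume : Measure ℝ) := by
    rw [hα₂fun]; exact hml₁.const_mul ι
  -- limits
  have hmaj_top : Tendsto (fun X : ℝ => Real.exp A * Real.exp (-c * |X|)) atTop (nhds 0) := by
    rw [show (0:ℝ) = Real.exp A * 0 by ring]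
    refine Tendsto.const_mul _ ?_
    refine Real.tendsto_exp_atBot.comp ?_
    exact (tendsto_const_mul_atBot_of_neg (by linarith : -c < 0)).mpr tendsto_abs_atTop_atTop
  have hmaj_bot : Tendsto (fun X : ℝ => Real.exp A * Real.exp (-c * |X|)) atBot (nhds 0) := by
    rw [show (0:ℝ) = Real.exp A * 0 by ring]
    refine Tendsto.const_mul _ ?_
    refine Real.tendsto_exp_atBot.comp ?_
    exact (tendsto_const_mul_atBot_of_neg (by linarith : -c < 0)).mpr tendsto_abs_atBot_atTop
  refine ⟨hcd₁, hcd₂, heq1, heq2,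
    ⟨Real.exp A, Real.exp_pos A, c, hc0, fun X => ⟨hbound₁ X, hbound₂' X⟩⟩,
    hml₁, hml₂,
    squeeze_zero_norm hbound₁ hmaj_top, squeeze_zero_norm hbound₁ hmaj_bot,
    squeeze_zero_norm hbound₂' hmaj_top, squeeze_zero_norm hbound₂' hmaj_bot⟩
end

section
/- Simplicity of the zero mode of the 1D Dirac operator. Let λ, θ be nonzero real numbers and let κ : ℝ → ℝ be continuous and bounded, with nonzero constants κ_{+∞}, κ_{−∞} satisfying κ_{+∞}·κ_{−∞} > 0, such that X ↦ κ(X) − κ_{+∞} is integrable on [0, ∞) and X ↦ κ(X) + κ_{−∞} is integrable on (−∞, 0]. Let α⋆(X) := (1, i)ᵀ exp(−(θ/λ) ∫₀^X κ(s) ds) if θκ_{+∞}/λ > 0 and α⋆(X) := (1, −i)ᵀ exp((θ/λ) ∫₀^X κ(s) ds) if θκ_{+∞}/λ < 0. Then every continuously differentiable α : ℝ → ℂ² satisfying iλσ₃α′(X) + θκ(X)σ₁α(X) = 0 for all X and α(X) → 0 as X → ±∞ is a complex scalar multiple of α⋆. -/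
open MeasureTheory Filter

private lemma ode_sol (μ : ℝ) (κ K : ℝ → ℝ) (hK : ∀ X, HasDerivAt K (κ X) X)
    (hK0 : K 0 = 0) (w : ℝ → ℂ)
    (hw : ∀ X, HasDerivAt w (((μ * κ X : ℝ) : ℂ) * w X) X) :
    ∀ X, w X = w 0 * ((Real.exp (μ * K X) : ℝ) : ℂ) := by
  have hE : ∀ X, HasDerivAt (fun X => ((Real.exp (-(μ * K X)) : ℝ) : ℂ))
      (((-(μ * κ X)) * Real.exp (-(μ * K X)) : ℝ) : ℂ) X := by
    intro X
    have h1 : HasDerivAt (fun X => -(μ * K X)) (-(μ * κ X)) X := ((hK X).const_mul μ).neg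
    have h2 := h1.exp
    exact HasDerivAt.ofReal_comp (by simpa [mul_comm] using h2)
  have hF : ∀ X, HasDerivAt (fun X => w X * ((Real.exp (-(μ * K X)) : ℝ) : ℂ)) 0 X := by
    intro X
    have h := (hw X).mul (hE X)
    refine h.congr_deriv ?_
    push_cast
    ring
  have hconst : ∀ X, w X * ((Real.exp (-(μ * K X)) : ℝ) : ℂ) = w 0 := by
    intro X
    have := is_const_of_deriv_eq_zero (fun x => (hF x).differentiableAt)
      (fun x => (hF x).deriv) X 0
    simpa [hK0] using this
  intro X
  have h1 := hconst X
  have h2 : ((Real.exp (-(μ * K X)) : ℝ) : ℂ) * ((Real.exp (μ * K X) : ℝ) : ℂ) = 1 := by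
    norm_cast
    rw [← Real.exp_add]
    simp
  calc w X = w X * (((Real.exp (-(μ * K X)) : ℝ) : ℂ) * ((Real.exp (μ * K X) : ℝ) : ℂ)) := by
        rw [h2, mul_one]
    _ = (w X * ((Real.exp (-(μ * K X)) : ℝ) : ℂ)) * ((Real.exp (μ * K X) : ℝ) : ℂ) := by ring
    _ = w 0 * ((Real.exp (μ * K X) : ℝ) : ℂ) := by rw [h1]

/-- Simplicity of the zero mode of the 1D Dirac operator. -/
theorem dirac_zero_mode_simplicity
    (lam θ : ℝ) (hlam : lam ≠ 0) (hθ : θ ≠ 0)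
    (κ : ℝ → ℝ) (hκc : Continuous κ) (hκb : ∃ M : ℝ, ∀ X, |κ X| ≤ M)
    (κp κm : ℝ) (hκp : κp ≠ 0) (hκm : κm ≠ 0) (hsign : 0 < κp * κm)
    (hintp : IntegrableOn (fun X => κ X - κp) (Set.Ici (0 : ℝ)))
    (hintm : IntegrableOn (fun X => κ X + κm) (Set.Iic (0 : ℝ)))
    (α₁ α₂ : ℝ → ℂ)
    (hα₁ : ∀ X : ℝ, α₁ X = if 0 < θ * κp / lam
        then ((Real.exp (-(θ / lam) * ∫ s in (0:ℝ)..X, κ s) : ℝ) : ℂ)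
        else ((Real.exp ((θ / lam) * ∫ s in (0:ℝ)..X, κ s) : ℝ) : ℂ))
    (hα₂ : ∀ X : ℝ, α₂ X = if 0 < θ * κp / lam
        then Complex.I * α₁ X else -Complex.I * α₁ X) :
    ∀ β₁ β₂ : ℝ → ℂ, ContDiff ℝ 1 β₁ → ContDiff ℝ 1 β₂ →
      (∀ X : ℝ, Complex.I * (lam : ℂ) * deriv β₁ X + (θ : ℂ) * (κ X : ℂ) * β₂ X = 0) →
      (∀ X : ℝ, -(Complex.I * (lam : ℂ)) * deriv β₂ X + (θ : ℂ) * (κ X : ℂ) * β₁ X = 0) →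
      Tendsto β₁ atTop (nhds 0) → Tendsto β₁ atBot (nhds 0) →
      Tendsto β₂ atTop (nhds 0) → Tendsto β₂ atBot (nhds 0) →
      ∃ c : ℂ, ∀ X : ℝ, β₁ X = c * α₁ X ∧ β₂ X = c * α₂ X := by
  intro β₁ β₂ hb₁ hb₂ heq1 heq2 ht1 htb1 ht2 htb2
  have hlamC : (lam : ℂ) ≠ 0 := by exact_mod_cast hlam
  obtain ⟨μ, hμdef⟩ : ∃ μ : ℝ, μ = θ / lam := ⟨_, rfl⟩
  obtain ⟨K, hKdef⟩ : ∃ K : ℝ → ℝ, ∀ X, K X = ∫ s in (0:ℝ)..X, κ s := ⟨_, fun _ => rfl⟩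
  have hμ0 : μ ≠ 0 := by rw [hμdef]; exact div_ne_zero hθ hlam
  have hμlam : (lam : ℂ) * ((μ : ℝ) : ℂ) = (θ : ℂ) := by
    rw [hμdef]; push_cast; field_simp
  have hK : ∀ X, HasDerivAt K (κ X) X := by
    intro X
    rw [show K = fun X => ∫ s in (0:ℝ)..X, κ s from funext hKdef]
    exact (hκc.integral_hasStrictDerivAt 0 X).hasDerivAt
  have hK0 : K 0 = 0 := by rw [hKdef]; simp
  have hd₁ : ∀ X, HasDerivAt β₁ (deriv β₁ X) X := fun X =>
    ((hb₁.differentiable one_ne_zero) X).hasDerivAt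
  have hd₂ : ∀ X, HasDerivAt β₂ (deriv β₂ X) X := fun X =>
    ((hb₂.differentiable one_ne_zero) X).hasDerivAt
  -- the two scalar combinations
  have hu : ∀ X, HasDerivAt (fun Y => β₁ Y + Complex.I * β₂ Y)
      (((μ * κ X : ℝ) : ℂ) * (β₁ X + Complex.I * β₂ X)) X := by
    intro X
    have h := (hd₁ X).add ((hd₂ X).const_mul Complex.I)
    have hEq : deriv β₁ X + Complex.I * deriv β₂ X
        = ((μ * κ X : ℝ) : ℂ) * (β₁ X + Complex.I * β₂ X) := by
      apply mul_left_cancel₀ (mul_ne_zero Complex.I_ne_zero hlamC)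
      have h1 := heq1 X
      have h2 := heq2 X
      push_cast
      linear_combination h1 + (-Complex.I) * h2
        + ((κ X : ℂ) * β₂ X - Complex.I * (κ X : ℂ) * β₁ X) * hμlam
        + (-(lam : ℂ) * (κ X : ℂ) * β₂ X * ((μ : ℝ) : ℂ)) * Complex.I_sq
    rw [← hEq]; exact h
  have hv : ∀ X, HasDerivAt (fun Y => β₁ Y - Complex.I * β₂ Y)
      (((-μ * κ X : ℝ) : ℂ) * (β₁ X - Complex.I * β₂ X)) X := by
    intro X
    have h := (hd₁ X).sub ((hd₂ X).const_mul Complex.I)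
    have hEq : deriv β₁ X - Complex.I * deriv β₂ X
        = ((-μ * κ X : ℝ) : ℂ) * (β₁ X - Complex.I * β₂ X) := by
      apply mul_left_cancel₀ (mul_ne_zero Complex.I_ne_zero hlamC)
      have h1 := heq1 X
      have h2 := heq2 X
      push_cast
      linear_combination h1 + Complex.I * h2
        + ((κ X : ℂ) * β₂ X + Complex.I * (κ X : ℂ) * β₁ X) * hμlam
        + (-(lam : ℂ) * (κ X : ℂ) * β₂ X * ((μ : ℝ) : ℂ)) * Complex.I_sq
    rw [← hEq]; exact h
  have hU := ode_sol μ κ K hK hK0 _ hu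
  have hV := ode_sol (-μ) κ K hK hK0 _ hv
  -- bound on K X - κp X for X ≥ 0
  obtain ⟨C, hC⟩ : ∃ C, ∀ X, 0 ≤ X → |K X - κp * X| ≤ C := by
    refine ⟨∫ x in Set.Ici (0:ℝ), |κ x - κp|, fun X hX => ?_⟩
    have hii : IntervalIntegrable κ volume 0 X := hκc.intervalIntegrable 0 X
    have h1 : K X - κp * X = ∫ s in (0:ℝ)..X, (κ s - κp) := by
      rw [intervalIntegral.integral_sub hii intervalIntegrable_const,
        intervalIntegral.integral_const, hKdef]
      simp [smul_eq_mul]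
      ring
    rw [h1]
    refine (intervalIntegral.abs_integral_le_integral_abs hX).trans ?_
    rw [intervalIntegral.integral_of_le hX]
    refine setIntegral_mono_set hintp.abs ?_ ?_
    · exact Eventually.of_forall fun x => abs_nonneg _
    · exact HasSubset.Subset.eventuallyLE fun x hx => le_of_lt hx.1
  -- decay of exp(-(ν K X)) at +∞ when ν κp > 0
  have hdecay : ∀ ν : ℝ, 0 < ν * κp →
      Tendsto (fun X => Real.exp (-(ν * K X))) atTop (nhds 0) := by
    intro ν hν
    have hKtop : Tendsto (fun X => ν * K X) atTop atTop := by
      have hlin : Tendsto (fun X : ℝ => ν * κp * X + -(|ν| * C)) atTop atTop := by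
        apply tendsto_atTop_add_const_right
        simpa using Tendsto.const_mul_atTop hν (tendsto_id (α := ℝ))
      have hev : (fun X : ℝ => ν * κp * X + -(|ν| * C)) ≤ᶠ[atTop] (fun X => ν * K X) := by
        filter_upwards [eventually_ge_atTop (0:ℝ)] with X hX
        have h1 : |ν * (K X - κp * X)| ≤ |ν| * C := by
          rw [abs_mul]; exact mul_le_mul_of_nonneg_left (hC X hX) (abs_nonneg ν)
        have h2 := (abs_le.mp h1).1
        have h3 : ν * K X = ν * κp * X + ν * (K X - κp * X) := by ring
        show ν * κp * X + -(|ν| * C) ≤ ν * K X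
        linarith
      exact tendsto_atTop_mono' atTop hev hlin
    have h2 : Tendsto (fun X => -(ν * K X)) atTop atBot := tendsto_neg_atTop_atBot.comp hKtop
    exact Real.tendsto_exp_atBot.comp h2
  -- forcing the constant to vanish
  have hforce : ∀ (ν : ℝ) (w : ℝ → ℂ), 0 < ν * κp →
      (∀ X, w X = w 0 * ((Real.exp (ν * K X) : ℝ) : ℂ)) →
      Tendsto w atTop (nhds 0) → w 0 = 0 := by
    intro ν w hν hw hlim
    have hconst : ∀ X, ‖w X‖ * Real.exp (-(ν * K X)) = ‖w 0‖ := by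
      intro X
      rw [hw X, norm_mul, Complex.norm_real, Real.norm_eq_abs,
        abs_of_pos (Real.exp_pos _), mul_assoc, ← Real.exp_add]
      simp
    have h1 : Tendsto (fun X => ‖w X‖ * Real.exp (-(ν * K X))) atTop (nhds 0) := by
      have := (hlim.norm).mul (hdecay ν hν)
      simpa using this
    have h2 : Tendsto (fun X => ‖w X‖ * Real.exp (-(ν * K X))) atTop (nhds ‖w 0‖) := by
      simp only [hconst]; exact tendsto_const_nhds
    have := tendsto_nhds_unique h2 h1
    simpa using this
  have hcond : (0 < θ * κp / lam) ↔ (0 < μ * κp) := by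
    rw [show θ * κp / lam = μ * κp from by rw [hμdef]; ring]
  have hμκp : μ * κp ≠ 0 := mul_ne_zero hμ0 hκp
  by_cases hcase : 0 < μ * κp
  · -- positive case : u must vanish
    have hulim : Tendsto (fun X => β₁ X + Complex.I * β₂ X) atTop (nhds 0) := by
      have := ht1.add (ht2.const_mul Complex.I)
      simpa using this
    have hu0 : β₁ 0 + Complex.I * β₂ 0 = 0 := hforce μ _ hcase hU hulim
    have huz : ∀ X, β₁ X + Complex.I * β₂ X = 0 := by
      intro X; rw [hU X, hu0, zero_mul]
    refine ⟨(β₁ 0 - Complex.I * β₂ 0) / 2, fun X => ?_⟩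
    have hvX := hV X
    have huX := huz X
    have hα₁X : α₁ X = ((Real.exp (-μ * K X) : ℝ) : ℂ) := by
      rw [hα₁ X, if_pos (hcond.mpr hcase),
        show -(θ / lam) * (∫ s in (0:ℝ)..X, κ s) = -μ * K X from by
          rw [hμdef, hKdef]]
    constructor
    · rw [hα₁X]
      linear_combination hvX / 2 + huX / 2
    · rw [hα₂ X, if_pos (hcond.mpr hcase), hα₁X]
      linear_combination (-Complex.I / 2) * huX + (Complex.I / 2) * hvX
        + (β₂ X) * Complex.I_sq
  · -- negative case : v must vanish
    have hneg : 0 < (-μ) * κp := by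
      have : μ * κp < 0 := lt_of_le_of_ne (not_lt.mp hcase) hμκp
      linarith
    have hvlim : Tendsto (fun X => β₁ X - Complex.I * β₂ X) atTop (nhds 0) := by
      have := ht1.sub (ht2.const_mul Complex.I)
      simpa using this
    have hv0 : β₁ 0 - Complex.I * β₂ 0 = 0 := hforce (-μ) _ hneg hV hvlim
    have hvz : ∀ X, β₁ X - Complex.I * β₂ X = 0 := by
      intro X; rw [hV X, hv0, zero_mul]
    refine ⟨(β₁ 0 + Complex.I * β₂ 0) / 2, fun X => ?_⟩
    have huX := hU X
    have hvX := hvz X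
    have hα₁X : α₁ X = ((Real.exp (μ * K X) : ℝ) : ℂ) := by
      rw [hα₁ X, if_neg (fun h => hcase (hcond.mp h)),
        show (θ / lam) * (∫ s in (0:ℝ)..X, κ s) = μ * K X from by
          rw [hμdef, hKdef]]
    constructor
    · rw [hα₁X]
      linear_combination huX / 2 + hvX / 2
    · rw [hα₂ X, if_neg (fun h => hcase (hcond.mp h)), hα₁X]
      linear_combination (-Complex.I / 2) * huX + (Complex.I / 2) * hvX
        + (β₂ X) * Complex.I_sq
end

section
/- Nonexistence of a zero mode when the domain-wall asymptotics have the same sign. Let λ, θ be nonzero real numbers and let κ : ℝ → ℝ be continuous and bounded, with nonzero constants κ_{+∞}, κ_{−∞} satisfying κ_{+∞}·κ_{−∞} < 0, such that X ↦ κ(X) − κ_{+∞} is integrable on [0, ∞) and X ↦ κ(X) + κ_{−∞} is integrable on (−∞, 0] (so that κ(X) → κ_{+∞} as X → +∞ and κ(X) → −κ_{−∞} as X → −∞, these two limits having the same sign). Then the only continuously differentiable α : ℝ → ℂ² satisfying iλσ₃α′(X) + θκ(X)σ₁α(X) = 0 for all X and α(X) → 0 as X → ±∞ is α ≡ 0.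 -/
open MeasureTheory Filter

/-- If `F X = exp(u X) * F 0` with `u → +∞` along a nontrivial filter and `F → 0`,
then `F 0 = 0`. -/
lemma dirac_aux_gzero {l : Filter ℝ} [l.NeBot] {u : ℝ → ℝ} {F : ℝ → ℂ}
    (hform : ∀ X, F X = Complex.exp ((u X : ℝ) : ℂ) * F 0)
    (hu : Tendsto u l atTop) (hF : Tendsto F l (nhds 0)) : F 0 = 0 := by
  by_contra h0
  have hnorm : ∀ X, ‖F X‖ = Real.exp (u X) * ‖F 0‖ := by
    intro X
    rw [hform X, norm_mul, Complex.norm_exp, Complex.ofReal_re]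
  have h1 : Tendsto (fun X => ‖F X‖) l atTop :=
    (((Real.tendsto_exp_atTop.comp hu).atTop_mul_const (norm_pos_iff.mpr h0)).congr
      (fun X => (hnorm X).symm))
  exact not_tendsto_atTop_of_tendsto_nhds (by simpa using hF.norm) h1

/-- Solution formula for the scalar ODE `F' = (c κ) F`. -/
lemma dirac_aux_ode (κ : ℝ → ℝ) (hκc : Continuous κ) (c : ℝ) (F : ℝ → ℂ)
    (hF : ∀ X, HasDerivAt F (((c * κ X : ℝ) : ℂ) * F X) X) :
    ∀ X, F X = Complex.exp ((c * (∫ t in (0:ℝ)..X, κ t) : ℝ) : ℂ) * F 0 := by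
  set K : ℝ → ℝ := fun X => ∫ t in (0:ℝ)..X, κ t with hKdef
  set φ : ℝ → ℂ := fun X => Complex.exp ((-(c * K X) : ℝ) : ℂ) * F X with hφdef
  have hφd : ∀ X, HasDerivAt φ 0 X := by
    intro X
    have hKX : HasDerivAt K (κ X) X := (hκc.integral_hasStrictDerivAt 0 X).hasDerivAt
    have h1 : HasDerivAt (fun X => ((-(c * K X) : ℝ) : ℂ)) ((-(c * κ X) : ℝ) : ℂ) X :=
      ((hKX.const_mul c).neg).ofReal_comp
    have h2 := h1.cexp
    have h3 := h2.mul (hF X)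
    refine h3.congr_deriv ?_
    push_cast
    ring
  have hφc : ∀ X, φ X = φ 0 :=
    fun X => is_const_of_deriv_eq_zero (fun x => (hφd x).differentiableAt) (fun x => (hφd x).deriv) X 0
  have hK0 : K 0 = 0 := intervalIntegral.integral_same
  intro X
  have h := hφc X
  simp only [hφdef, hK0, mul_zero, neg_zero, Complex.ofReal_zero, Complex.exp_zero, one_mul] at h
  have hne : Complex.exp ((-(c * K X) : ℝ) : ℂ) ≠ 0 := Complex.exp_ne_zero _
  have : Complex.exp (((c * K X) : ℝ) : ℂ) * (Complex.exp ((-(c * K X) : ℝ) : ℂ) * F X)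
      = Complex.exp (((c * K X) : ℝ) : ℂ) * F 0 := by rw [h]
  rwa [← mul_assoc, ← Complex.exp_add, show (((c * K X) : ℝ) : ℂ) + ((-(c * K X) : ℝ) : ℂ) = 0 by
    push_cast; ring, Complex.exp_zero, one_mul] at this

/-- Nonexistence of a zero mode when the domain-wall asymptotics have the same sign. -/
theorem dirac_zero_mode_nonexistence
    (lam θ : ℝ) (hlam : lam ≠ 0) (hθ : θ ≠ 0)
    (κ : ℝ → ℝ) (hκc : Continuous κ) (hκb : ∃ M : ℝ, ∀ X, |κ X| ≤ M)
    (κp κm : ℝ) (hκp : κp ≠ 0) (hκm : κm ≠ 0) (hsign : κp * κm < 0)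
    (hintp : IntegrableOn (fun X => κ X - κp) (Set.Ici (0 : ℝ)))
    (hintm : IntegrableOn (fun X => κ X + κm) (Set.Iic (0 : ℝ))) :
    ∀ β₁ β₂ : ℝ → ℂ, ContDiff ℝ 1 β₁ → ContDiff ℝ 1 β₂ →
      (∀ X : ℝ, Complex.I * (lam : ℂ) * deriv β₁ X + (θ : ℂ) * (κ X : ℂ) * β₂ X = 0) →
      (∀ X : ℝ, -(Complex.I * (lam : ℂ)) * deriv β₂ X + (θ : ℂ) * (κ X : ℂ) * β₁ X = 0) →
      Tendsto β₁ atTop (nhds 0) → Tendsto β₁ atBot (nhds 0) →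
      Tendsto β₂ atTop (nhds 0) → Tendsto β₂ atBot (nhds 0) →
      ∀ X : ℝ, β₁ X = 0 ∧ β₂ X = 0 := by
  intro β₁ β₂ hβ₁ hβ₂ e1 e2 t1T t1B t2T t2B
  set a : ℝ := θ / lam with ha_def
  have ha : a ≠ 0 := div_ne_zero hθ hlam
  have hlamC : (lam : ℂ) ≠ 0 := by exact_mod_cast hlam
  set K : ℝ → ℝ := fun X => ∫ t in (0:ℝ)..X, κ t with hKdef
  -- derivative identities
  have hd1 : ∀ X, HasDerivAt β₁ (deriv β₁ X) X := fun X => (hβ₁.differentiable one_ne_zero X).hasDerivAt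
  have hd2 : ∀ X, HasDerivAt β₂ (deriv β₂ X) X := fun X => (hβ₂.differentiable one_ne_zero X).hasDerivAt
  -- g = β₁ + i β₂ and h = β₁ - i β₂
  set g : ℝ → ℂ := fun X => β₁ X + Complex.I * β₂ X with hgdef
  set h : ℝ → ℂ := fun X => β₁ X - Complex.I * β₂ X with hhdef
  have hgd : ∀ X, HasDerivAt g (((a * κ X : ℝ) : ℂ) * g X) X := by
    intro X
    have hD : HasDerivAt g (deriv β₁ X + Complex.I * deriv β₂ X) X :=
      (hd1 X).add ((hd2 X).const_mul Complex.I)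
    have h1 := e1 X
    have h2 := e2 X
    have hI2 : (Complex.I : ℂ) ^ 2 = -1 := Complex.I_sq
    have key : (lam : ℂ) * (deriv β₁ X + Complex.I * deriv β₂ X)
        = (θ : ℂ) * (κ X : ℂ) * g X := by
      simp only [hgdef]
      linear_combination (-Complex.I) * h1 - h2 + (lam : ℂ) * deriv β₁ X * hI2
    have hval : deriv β₁ X + Complex.I * deriv β₂ X = ((a * κ X : ℝ) : ℂ) * g X := by
      apply mul_left_cancel₀ hlamC
      rw [key]
      push_cast [ha_def]
      field_simp
      try ring
    rw [← hval]; exact hD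
  have hhd : ∀ X, HasDerivAt h (((-a * κ X : ℝ) : ℂ) * h X) X := by
    intro X
    have hD : HasDerivAt h (deriv β₁ X - Complex.I * deriv β₂ X) X :=
      (hd1 X).sub ((hd2 X).const_mul Complex.I)
    have h1 := e1 X
    have h2 := e2 X
    have hI2 : (Complex.I : ℂ) ^ 2 = -1 := Complex.I_sq
    have key : (lam : ℂ) * (deriv β₁ X - Complex.I * deriv β₂ X)
        = -((θ : ℂ) * (κ X : ℂ)) * h X := by
      simp only [hhdef]
      linear_combination (-Complex.I) * h1 + h2 + (lam : ℂ) * deriv β₁ X * hI2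
    have hval : deriv β₁ X - Complex.I * deriv β₂ X = ((-a * κ X : ℝ) : ℂ) * h X := by
      apply mul_left_cancel₀ hlamC
      rw [key]
      push_cast [ha_def]
      field_simp
      try ring
    rw [← hval]; exact hD
  -- solution formulas
  have hgform := dirac_aux_ode κ hκc a g hgd
  have hhform := dirac_aux_ode κ hκc (-a) h hhd
  -- limits of K
  have hconvp : Tendsto (fun X => ∫ t in (0:ℝ)..X, (κ t - κp)) atTop
      (nhds (∫ t in Set.Ioi (0:ℝ), (κ t - κp))) :=
    intervalIntegral_tendsto_integral_Ioi 0 (hintp.mono_set Set.Ioi_subset_Ici_self) tendsto_id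
  have hKeqT : ∀ X : ℝ, K X = (∫ t in (0:ℝ)..X, (κ t - κp)) + κp * X := by
    intro X
    have h1 : IntervalIntegrable κ volume 0 X := hκc.intervalIntegrable 0 X
    have h2 : IntervalIntegrable (fun _ : ℝ => κp) volume 0 X := intervalIntegrable_const
    have : (∫ t in (0:ℝ)..X, (κ t - κp)) = (∫ t in (0:ℝ)..X, κ t) - ∫ t in (0:ℝ)..X, κp :=
      intervalIntegral.integral_sub h1 h2
    rw [this, intervalIntegral.integral_const]
    simp only [hKdef, smul_eq_mul]
    ring
  have hconvm : Tendsto (fun X => ∫ t in X..(0:ℝ), (κ t + κm)) atBot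
      (nhds (∫ t in Set.Iic (0:ℝ), (κ t + κm))) :=
    intervalIntegral_tendsto_integral_Iic 0 hintm tendsto_id
  have hKeqB : ∀ X : ℝ, K X = -(∫ t in X..(0:ℝ), (κ t + κm)) + (-κm) * X := by
    intro X
    have hsymm : K X = -(∫ t in X..(0:ℝ), κ t) := intervalIntegral.integral_symm X 0
    have h1 : IntervalIntegrable κ volume X 0 := hκc.intervalIntegrable X 0
    have h2 : IntervalIntegrable (fun _ : ℝ => κm) volume X 0 := intervalIntegrable_const
    have hadd : (∫ t in X..(0:ℝ), (κ t + κm)) = (∫ t in X..(0:ℝ), κ t) + ∫ t in X..(0:ℝ), κm :=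
      intervalIntegral.integral_add h1 h2
    rw [hsymm, hadd, intervalIntegral.integral_const]
    simp only [smul_eq_mul]
    ring
  have hKpm : (Tendsto K atTop atTop ∧ Tendsto K atBot atBot) ∨
      (Tendsto K atTop atBot ∧ Tendsto K atBot atTop) := by
    rcases mul_neg_iff.mp hsign with ⟨hp, hm⟩ | ⟨hp, hm⟩
    · left
      constructor
      · refine Tendsto.congr (fun X => (hKeqT X).symm) ?_
        exact hconvp.add_atTop (Tendsto.const_mul_atTop hp tendsto_id)
      · refine Tendsto.congr (fun X => (hKeqB X).symm) ?_
        refine (hconvm.neg).add_atBot ?_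
        exact (tendsto_const_mul_atBot_of_pos (by linarith : (0:ℝ) < -κm)).mpr tendsto_id
    · right
      constructor
      · refine Tendsto.congr (fun X => (hKeqT X).symm) ?_
        refine hconvp.add_atBot ?_
        exact (tendsto_const_mul_atBot_of_neg hp).mpr tendsto_id
      · refine Tendsto.congr (fun X => (hKeqB X).symm) ?_
        refine (hconvm.neg).add_atTop ?_
        exact (tendsto_const_mul_atTop_of_neg (by linarith : -κm < 0)).mpr tendsto_id
  have key : ∀ c : ℝ, c ≠ 0 →
      Tendsto (fun X => c * K X) atTop atTop ∨ Tendsto (fun X => c * K X) atBot atTop := by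
    intro c hc
    rcases hc.lt_or_gt with hneg | hpos
    · rcases hKpm with ⟨h1, h2⟩ | ⟨h1, h2⟩
      · exact Or.inr ((tendsto_const_mul_atTop_of_neg hneg).mpr h2)
      · exact Or.inl ((tendsto_const_mul_atTop_of_neg hneg).mpr h1)
    · rcases hKpm with ⟨h1, h2⟩ | ⟨h1, h2⟩
      · exact Or.inl (h1.const_mul_atTop hpos)
      · exact Or.inr (h2.const_mul_atTop hpos)
  -- limits of g and h
  have hgT : Tendsto g atTop (nhds 0) := by
    have := t1T.add (t2T.const_mul Complex.I)
    simpa using this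
  have hgB : Tendsto g atBot (nhds 0) := by
    have := t1B.add (t2B.const_mul Complex.I)
    simpa using this
  have hhT : Tendsto h atTop (nhds 0) := by
    have := t1T.sub (t2T.const_mul Complex.I)
    simpa using this
  have hhB : Tendsto h atBot (nhds 0) := by
    have := t1B.sub (t2B.const_mul Complex.I)
    simpa using this
  have hg0 : g 0 = 0 := by
    rcases key a ha with hk | hk
    · exact dirac_aux_gzero hgform hk hgT
    · exact dirac_aux_gzero hgform hk hgB
  have hh0 : h 0 = 0 := by
    rcases key (-a) (neg_ne_zero.mpr ha) with hk | hk
    · exact dirac_aux_gzero hhform hk hhT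
    · exact dirac_aux_gzero hhform hk hhB
  intro X
  have hgX : g X = 0 := by rw [hgform X, hg0, mul_zero]
  have hhX : h X = 0 := by rw [hhform X, hh0, mul_zero]
  simp only [hgdef, hhdef] at hgX hhX
  constructor
  · linear_combination (hgX + hhX) / 2
  · have hI : (Complex.I : ℂ) ≠ 0 := Complex.I_ne_zero
    have : Complex.I * β₂ X = 0 := by linear_combination (hgX - hhX) / 2
    exact (mul_eq_zero.mp this).resolve_left hI
end

section
/- L² bounds on Poisson-summation tails. Fix τ ∈ (0, 1). There exist δ₀ ∈ (0, 1] and C > 0, depending only on τ, with the following property. Let 0 < δ < δ₀, let f : ℝ × ℝ → ℂ and g : ℝ → ℂ be continuous with f(x+1, ω) = f(x, ω) and g(x+1) = g(x), and set C_f := sup{ |f(x, ω)| : x ∈ [0,1], |ω| ≤ δ^τ } and C_g := sup_{x ∈ [0,1]} |g(x)|, assumed finite. Let Γ̂ : ℝ × ℝ → ℂ be continuous, 1-periodic in its first variable, with M := ‖ sup_{x ∈ [0,1]} |Γ̂(x, ·)| ‖_{L^{2,1}(ℝ)} < ∞. For m ∈ ℤ define I_m(ξ; δ) := ∫₀¹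 e^{2πimx} Γ̂(x, 2πm/δ + ξ) conj(f(x, δξ)) g(x) dx. Then for almost every ξ with |ξ| ≤ δ^{τ−1} the series ∑_{|m| ≥ 1} I_m(ξ; δ) and ∑_{m ∈ ℤ} I_m(ξ; δ) converge absolutely, and ‖ 1_{|ξ| ≤ δ^{τ−1}} ∑_{|m| ≥ 1} I_m(ξ; δ) ‖_{L²(ℝ_ξ)} ≤ C C_f C_g δ M and ‖ 1_{|ξ| ≤ δ^{τ−1}} ∑_{m ∈ ℤ} I_m(ξ; δ) ‖_{L²(ℝ_ξ)} ≤ C C_f C_g M. -/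
open MeasureTheory Filter
open scoped ENNReal NNReal

lemma aux_enorm_tsum_le {ι : Type*} [Countable ι] (x : ι → ℂ) :
    (‖∑' i, x i‖₊ : ℝ≥0∞) ≤ ∑' i, (‖x i‖₊ : ℝ≥0∞) := by
  by_cases hs : Summable fun i => ‖x i‖
  · calc (‖∑' i, x i‖₊ : ℝ≥0∞) = ENNReal.ofReal ‖∑' i, x i‖ :=
          (ofReal_norm _).symm
      _ ≤ ENNReal.ofReal (∑' i, ‖x i‖) :=
          ENNReal.ofReal_le_ofReal (norm_tsum_le_tsum_norm hs)
      _ = ∑' i, ENNReal.ofReal ‖x i‖ :=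
          ENNReal.ofReal_tsum_of_nonneg (fun _ => norm_nonneg _) hs
      _ = ∑' i, (‖x i‖₊ : ℝ≥0∞) := tsum_congr fun i => ofReal_norm _
  · have h1 : ¬ Summable fun i => ‖x i‖₊ := by
      intro h
      exact hs (by simpa using NNReal.summable_coe.2 h)
    have h2 : (∑' i, (‖x i‖₊ : ℝ≥0∞)) = ⊤ := by
      by_contra h
      exact h1 (ENNReal.tsum_coe_ne_top_iff_summable.1 h)
    simp [h2]

lemma aux_CS (P Q : ℤ → ℝ≥0∞) :
    (∑' m, P m * Q m)
      ≤ (∑' m, P m ^ (2:ℝ)) ^ ((1:ℝ)/2) * (∑' m, Q m ^ (2:ℝ)) ^ ((1:ℝ)/2) := by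
  have hpq : Real.HolderConjugate 2 2 := Real.HolderConjugate.two_two
  have := ENNReal.lintegral_mul_le_Lp_mul_Lq (Measure.count : Measure ℤ) hpq
    (f := P) (g := Q) (measurable_of_countable P).aemeasurable
    (measurable_of_countable Q).aemeasurable
  simpa [lintegral_count] using this

lemma aux_sq_add (a b : ℝ≥0∞) : (a + b)^2 ≤ 4*(a^2 + b^2) := by
  have h1 : a + b ≤ 2 * max a b := by
    calc a + b ≤ max a b + max a b := add_le_add (le_max_left _ _) (le_max_right _ _)
      _ = 2 * max a b := (two_mul _).symm
  have h2 : (max a b)^2 ≤ a^2 + b^2 := by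
    rcases max_cases a b with ⟨h, _⟩ | ⟨h, _⟩ <;> rw [h]
    · exact le_self_add
    · exact le_add_self
  calc (a+b)^2 ≤ (2 * max a b)^2 := by gcongr
    _ = 4 * (max a b)^2 := by ring
    _ ≤ 4*(a^2+b^2) := by gcongr

lemma aux_half_sq (x : ℝ≥0∞) : (x ^ ((1:ℝ)/2)) ^ (2:ℕ) = x := by
  rw [← ENNReal.rpow_natCast (x ^ ((1:ℝ)/2)) 2, ← ENNReal.rpow_mul]
  norm_num

set_option maxHeartbeats 2000000 in
/-- L² bounds on Poisson-summation tails. -/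
theorem poisson_tail_L2_bounds (τ : ℝ) (hτ : τ ∈ Set.Ioo (0:ℝ) 1) :
    ∃ δ₀ ∈ Set.Ioc (0:ℝ) 1, ∃ C > (0:ℝ),
      ∀ δ : ℝ, 0 < δ → δ < δ₀ →
      ∀ (f : ℝ → ℝ → ℂ) (g : ℝ → ℂ) (Γhat : ℝ → ℝ → ℂ) (Cf Cg M : ℝ),
        (Continuous fun p : ℝ × ℝ => f p.1 p.2) → Continuous g →
        (∀ x ω : ℝ, f (x + 1) ω = f x ω) → (∀ x : ℝ, g (x + 1) = g x) →
        (∀ x ∈ Set.Icc (0:ℝ) 1, ∀ ω : ℝ, |ω| ≤ δ ^ τ → ‖f x ω‖ ≤ Cf) →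
        (∀ x ∈ Set.Icc (0:ℝ) 1, ‖g x‖ ≤ Cg) →
        (Continuous fun p : ℝ × ℝ => Γhat p.1 p.2) →
        (∀ x ζ : ℝ, Γhat (x + 1) ζ = Γhat x ζ) →
        0 ≤ M →
        Integrable (fun ζ : ℝ =>
          (1 + ζ ^ 2) * (⨆ x : Set.Icc (0:ℝ) 1, ‖Γhat (x : ℝ) ζ‖) ^ 2) →
        (∫ ζ : ℝ, (1 + ζ ^ 2) * (⨆ x : Set.Icc (0:ℝ) 1, ‖Γhat (x : ℝ) ζ‖) ^ 2) ≤ M ^ 2 →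
        (let I : ℤ → ℝ → ℂ := fun m ξ =>
          ∫ x in (0:ℝ)..1,
            Complex.exp (2 * (Real.pi : ℂ) * Complex.I * (m : ℂ) * (x : ℂ)) *
              Γhat x (2 * Real.pi * (m : ℝ) / δ + ξ) *
              (starRingEnd ℂ) (f x (δ * ξ)) * g x
        (∀ᵐ ξ ∂(volume.restrict (Set.Icc (-(δ ^ (τ - 1))) (δ ^ (τ - 1)))),
            Summable fun m : ℤ => ‖I m ξ‖) ∧
        (∫⁻ ξ in Set.Icc (-(δ ^ (τ - 1))) (δ ^ (τ - 1)),
            (‖∑' m : ℤ, (if m = 0 then 0 else I m ξ)‖₊ : ℝ≥0∞) ^ 2)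
          ≤ ENNReal.ofReal ((C * Cf * Cg * δ * M) ^ 2) ∧
        (∫⁻ ξ in Set.Icc (-(δ ^ (τ - 1))) (δ ^ (τ - 1)),
            (‖∑' m : ℤ, I m ξ‖₊ : ℝ≥0∞) ^ 2)
          ≤ ENNReal.ofReal ((C * Cf * Cg * M) ^ 2)) := by
  obtain ⟨hτ0, hτ1⟩ := hτ
  have hKsum : Summable fun m : ℤ => 1/(m:ℝ)^2 := Real.summable_one_div_int_pow.2 one_lt_two
  set K : ℝ := ∑' m : ℤ, 1/(m:ℝ)^2 with hKdef
  have hK0 : 0 ≤ K := tsum_nonneg fun m => by positivity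
  have hC0 : (0:ℝ) < 2*(1+Real.sqrt K) := by positivity
  refine ⟨1, ⟨zero_lt_one, le_refl 1⟩, 2*(1+Real.sqrt K), hC0, ?_⟩
  intro δ hδ0 hδ1 f g Γhat Cf Cg M hfc hgc hfp hgp hfb hgb hΓc hΓp hM0 hInt hIntLe
  set C : ℝ := 2*(1+Real.sqrt K) with hCdef
  have hC2 : K ≤ C^2 := by
    have h := Real.sq_sqrt hK0
    nlinarith [Real.sqrt_nonneg K]
  set A : ℝ := δ ^ (τ-1) with hAdef
  have hA0 : 0 < A := Real.rpow_pos_of_pos hδ0 _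
  have hδτ1 : δ ^ τ < 1 := Real.rpow_lt_one hδ0.le hδ1 hτ0
  have hδτ0 : 0 < δ ^ τ := Real.rpow_pos_of_pos hδ0 _
  have hδA : δ * A = δ ^ τ := by
    have h := (Real.rpow_add hδ0 1 (τ-1)).symm
    rw [Real.rpow_one, show (1:ℝ)+(τ-1) = τ by ring] at h
    rw [hAdef]; exact h
  have hπ1 : (1:ℝ) ≤ Real.pi := by linarith [Real.pi_gt_three]
  have hAπ : A < Real.pi / δ := by
    have h1 : A * δ < 1 := by rw [mul_comm, hδA]; exact hδτ1
    have h2 : A < 1/δ := (lt_div_iff₀ hδ0).2 h1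
    have h3 : 1/δ ≤ Real.pi/δ := by gcongr
    linarith
  -- the sup function S via continuous maps
  haveI hne : Nonempty (Set.Icc (0:ℝ) 1) := (Set.nonempty_Icc.2 zero_le_one).to_subtype
  set Hc : C(ℝ × (Set.Icc (0:ℝ) 1), ℂ) :=
    ⟨fun q => Γhat (q.2 : ℝ) q.1,
      hΓc.comp ((continuous_subtype_val.comp continuous_snd).prodMk continuous_fst)⟩
    with hHcdef
  set F : C(ℝ, C(Set.Icc (0:ℝ) 1, ℂ)) := Hc.curry with hFdef
  have hFapp : ∀ (ζ : ℝ) (x : Set.Icc (0:ℝ) 1), F ζ x = Γhat (x:ℝ) ζ := fun _ _ => rfl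
  set S : ℝ → ℝ := fun ζ => ‖F ζ‖ with hSdef
  have hS0 : ∀ ζ, 0 ≤ S ζ := fun ζ => norm_nonneg _
  have hS_cont : Continuous S := continuous_norm.comp F.continuous
  have hS_eq : ∀ ζ, (⨆ x : Set.Icc (0:ℝ) 1, ‖Γhat (x:ℝ) ζ‖) = S ζ := by
    intro ζ
    rw [hSdef]
    simp only [(F ζ).norm_eq_iSup_norm, hFapp]
  have hS_bd : ∀ (ζ x : ℝ), x ∈ Set.Icc (0:ℝ) 1 → ‖Γhat x ζ‖ ≤ S ζ := by
    intro ζ x hx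
    have := (F ζ).norm_coe_le_norm ⟨x, hx⟩
    rwa [hFapp] at this
  -- the weight function φ
  set φ : ℝ → ℝ≥0∞ := fun ζ => ENNReal.ofReal ((1+ζ^2) * S ζ^2) with hφdef
  have hφ_meas : Measurable φ :=
    ENNReal.measurable_ofReal.comp
      (((continuous_const.add (continuous_pow 2)).mul (hS_cont.pow 2)).measurable)
  have hφ_int : ∫⁻ ζ, φ ζ ≤ ENNReal.ofReal (M^2) := by
    have heq : (fun ζ : ℝ => (1 + ζ ^ 2) * (⨆ x : Set.Icc (0:ℝ) 1, ‖Γhat (x : ℝ) ζ‖) ^ 2)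
        = fun ζ => (1+ζ^2) * S ζ^2 := funext fun ζ => by rw [hS_eq]
    rw [heq] at hInt hIntLe
    have h1 : ENNReal.ofReal (∫ ζ, (1+ζ^2) * S ζ^2) = ∫⁻ ζ, φ ζ :=
      MeasureTheory.ofReal_integral_eq_lintegral_ofReal hInt
        (Filter.Eventually.of_forall fun ζ => by positivity)
    rw [← h1]
    exact ENNReal.ofReal_le_ofReal hIntLe
  set c : ℤ → ℝ := fun m => 2*Real.pi*(m:ℝ)/δ with hcdef
  have hCf0 : 0 ≤ Cf :=
    le_trans (norm_nonneg (f 0 0)) (hfb 0 ⟨le_refl 0, zero_le_one⟩ 0 (by simpa using hδτ0.le))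
  have hCg0 : 0 ≤ Cg := le_trans (norm_nonneg (g 0)) (hgb 0 ⟨le_refl 0, zero_le_one⟩)
  intro I
  have hIdef : I = fun (m : ℤ) (ξ : ℝ) =>
      ∫ x in (0:ℝ)..1,
        Complex.exp (2 * (Real.pi : ℂ) * Complex.I * (m : ℂ) * (x : ℂ)) *
          Γhat x (2 * Real.pi * (m : ℝ) / δ + ξ) *
          (starRingEnd ℂ) (f x (δ * ξ)) * g x := rfl
  -- pointwise bound on I
  have hI_bd : ∀ (m : ℤ) (ξ : ℝ), |ξ| ≤ A → ‖I m ξ‖ ≤ Cf * Cg * S (c m + ξ) := by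
    intro m ξ hξ
    rw [hIdef]
    have hbound : ∀ x ∈ Set.uIoc (0:ℝ) 1,
        ‖Complex.exp (2*(Real.pi:ℂ)*Complex.I*(m:ℂ)*(x:ℂ)) *
          Γhat x (2*Real.pi*(m:ℝ)/δ + ξ) * (starRingEnd ℂ) (f x (δ*ξ)) * g x‖
          ≤ S (c m + ξ) * Cf * Cg := by
      intro x hx
      have hx' : x ∈ Set.Icc (0:ℝ) 1 := by
        rw [Set.uIoc_of_le zero_le_one] at hx
        exact ⟨hx.1.le, hx.2⟩
      have he : ‖Complex.exp (2*(Real.pi:ℂ)*Complex.I*(m:ℂ)*(x:ℂ))‖ = 1 := by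
        have h : (2*(Real.pi:ℂ)*Complex.I*(m:ℂ)*(x:ℂ))
            = ((2*Real.pi*(m:ℝ)*x : ℝ):ℂ) * Complex.I := by push_cast; ring
        rw [h, Complex.norm_exp_ofReal_mul_I]
      have hω : |δ * ξ| ≤ δ ^ τ := by
        rw [abs_mul, abs_of_pos hδ0, ← hδA]
        have := hδ0.le
        gcongr
      have hfle : ‖(starRingEnd ℂ) (f x (δ*ξ))‖ ≤ Cf := by
        rw [RCLike.norm_conj]
        exact hfb x hx' _ hω
      rw [norm_mul, norm_mul, norm_mul, he, one_mul]
      have hΓle : ‖Γhat x (2*Real.pi*(m:ℝ)/δ + ξ)‖ ≤ S (c m + ξ) := by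
        rw [hcdef]
        exact hS_bd _ x hx'
      exact mul_le_mul (mul_le_mul hΓle hfle (norm_nonneg _) (hS0 _)) (hgb x hx')
        (norm_nonneg _) (by positivity)
    have h := intervalIntegral.norm_integral_le_of_norm_le_const hbound
    simp only [sub_zero, abs_one, mul_one] at h
    calc ‖_‖ ≤ S (c m + ξ) * Cf * Cg := h
      _ = Cf * Cg * S (c m + ξ) := by ring
  -- lower bound on shifted frequencies
  have hζ : ∀ m : ℤ, m ≠ 0 → ∀ ξ : ℝ, |ξ| ≤ A →
      Real.pi^2 * (m:ℝ)^2 / δ^2 ≤ 1 + (c m + ξ)^2 := by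
    intro m hm ξ hξ
    have h1 : (1:ℝ) ≤ |(m:ℝ)| := by
      rw [← Int.cast_abs]
      exact_mod_cast Int.one_le_abs hm
    have hcm : |c m| = 2*Real.pi*|(m:ℝ)|/δ := by
      rw [hcdef]
      rw [abs_div, abs_of_pos hδ0, abs_mul, abs_of_pos (by positivity : (0:ℝ) < 2*Real.pi)]
    have hab : |c m| ≤ |c m + ξ| + |ξ| := by
      calc |c m| = |(c m + ξ) + (-ξ)| := by ring_nf
        _ ≤ |c m + ξ| + |(-ξ)| := abs_add_le _ _
        _ = |c m + ξ| + |ξ| := by rw [abs_neg]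
    have hmono : Real.pi/δ ≤ Real.pi*|(m:ℝ)|/δ := by gcongr; nlinarith [Real.pi_pos]
    have h2 : Real.pi * |(m:ℝ)| / δ ≤ |c m + ξ| := by
      have h3 : 2*(Real.pi*|(m:ℝ)|/δ) = 2*Real.pi*|(m:ℝ)|/δ := by ring
      linarith [hcm, hab, hξ, hAπ.le]
    have h4 : (Real.pi*|(m:ℝ)|/δ)^2 ≤ (c m + ξ)^2 := by
      rw [← sq_abs (c m + ξ)]
      exact pow_le_pow_left₀ (by positivity) h2 2
    have h5 : (Real.pi*|(m:ℝ)|/δ)^2 = Real.pi^2*(m:ℝ)^2/δ^2 := by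
      rw [div_pow, mul_pow, sq_abs]
    linarith
  -- inverse-weight bound
  have hP2 : ∀ m : ℤ, m ≠ 0 → ∀ ξ : ℝ, |ξ| ≤ A →
      (ENNReal.ofReal (1+(c m+ξ)^2))⁻¹
        ≤ ENNReal.ofReal (δ^2/Real.pi^2 * (1/(m:ℝ)^2)) := by
    intro m hm ξ hξ
    have hm' : ((m:ℝ)) ≠ 0 := Int.cast_ne_zero.2 hm
    have hpos : (0:ℝ) < 1+(c m+ξ)^2 := by positivity
    rw [← ENNReal.ofReal_inv_of_pos hpos]
    apply ENNReal.ofReal_le_ofReal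
    have hpos2 : (0:ℝ) < Real.pi^2 * (m:ℝ)^2 / δ^2 := by positivity
    have h6 : (1+(c m+ξ)^2)⁻¹ ≤ (Real.pi^2 * (m:ℝ)^2 / δ^2)⁻¹ :=
      inv_anti₀ hpos2 (hζ m hm ξ hξ)
    calc (1+(c m+ξ)^2)⁻¹ ≤ (Real.pi^2 * (m:ℝ)^2 / δ^2)⁻¹ := h6
      _ = δ^2/Real.pi^2 * (1/(m:ℝ)^2) := by
          field_simp
  -- the tail sum V
  set V : ℝ → ℝ≥0∞ := fun ξ => ∑' m : ℤ, (if m = 0 then 0 else ENNReal.ofReal (S (c m + ξ)))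
    with hVdef
  -- Cauchy–Schwarz bound on V
  have key : ∀ ξ : ℝ, |ξ| ≤ A →
      V ξ ≤ (ENNReal.ofReal (δ^2/Real.pi^2 * K)) ^ ((1:ℝ)/2)
        * (∑' m : ℤ, φ (c m + ξ)) ^ ((1:ℝ)/2) := by
    intro ξ hξ
    set t : ℤ → ℝ≥0∞ := fun m => ENNReal.ofReal (1 + (c m + ξ)^2) with htdef
    have ht0 : ∀ m, t m ≠ 0 := by
      intro m
      rw [htdef]
      simp only [Ne, ENNReal.ofReal_eq_zero, not_le]
      positivity
    have httop : ∀ m, t m ≠ ⊤ := fun m => ENNReal.ofReal_ne_top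
    set P : ℤ → ℝ≥0∞ := fun m => if m = 0 then 0 else (t m) ^ (-(1/2) : ℝ) with hPdef
    set Q : ℤ → ℝ≥0∞ := fun m => (t m) ^ ((1/2) : ℝ) * ENNReal.ofReal (S (c m + ξ)) with hQdef
    have hPQ : ∀ m : ℤ, (if m = 0 then 0 else ENNReal.ofReal (S (c m + ξ))) = P m * Q m := by
      intro m
      by_cases hm : m = 0
      · simp [hPdef, hm]
      · simp only [hPdef, hQdef, if_neg hm]
        rw [← mul_assoc, ← ENNReal.rpow_add _ _ (ht0 m) (httop m)]
        norm_num
    have hsum1 : (∑' m : ℤ, P m ^ (2:ℝ)) ≤ ENNReal.ofReal (δ^2/Real.pi^2 * K) := by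
      have h1 : ∀ m : ℤ, P m ^ (2:ℝ) ≤ ENNReal.ofReal (δ^2/Real.pi^2 * (1/(m:ℝ)^2)) := by
        intro m
        by_cases hm : m = 0
        · simp [hPdef, hm, ENNReal.zero_rpow_of_pos]
        · simp only [hPdef, if_neg hm]
          rw [← ENNReal.rpow_mul, show (-(1/2):ℝ)*2 = -1 by norm_num, ENNReal.rpow_neg_one]
          exact hP2 m hm ξ hξ
      calc (∑' m : ℤ, P m ^ (2:ℝ))
          ≤ ∑' m : ℤ, ENNReal.ofReal (δ^2/Real.pi^2 * (1/(m:ℝ)^2)) := ENNReal.tsum_le_tsum h1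
        _ = ENNReal.ofReal (∑' m : ℤ, δ^2/Real.pi^2 * (1/(m:ℝ)^2)) :=
            (ENNReal.ofReal_tsum_of_nonneg (fun m => by positivity) (hKsum.mul_left _)).symm
        _ = ENNReal.ofReal (δ^2/Real.pi^2 * K) := by rw [tsum_mul_left]
    have hsum2 : (∑' m : ℤ, Q m ^ (2:ℝ)) = ∑' m : ℤ, φ (c m + ξ) := by
      refine tsum_congr fun m => ?_
      rw [hQdef]
      simp only []
      rw [ENNReal.mul_rpow_of_nonneg _ _ (by norm_num : (0:ℝ) ≤ 2), ← ENNReal.rpow_mul]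
      rw [ENNReal.ofReal_rpow_of_nonneg (hS0 _) (by norm_num)]
      rw [htdef, hφdef]
      simp only []
      rw [show ((1:ℝ)/2*2) = 1 by norm_num, ENNReal.rpow_one]
      rw [← ENNReal.ofReal_mul (by positivity)]
      congr 1
      rw [show ((2:ℝ)) = ((2:ℕ):ℝ) by norm_num, Real.rpow_natCast]
    calc V ξ = ∑' m : ℤ, P m * Q m := tsum_congr hPQ
      _ ≤ (∑' m : ℤ, P m ^ (2:ℝ)) ^ ((1:ℝ)/2) * (∑' m : ℤ, Q m ^ (2:ℝ)) ^ ((1:ℝ)/2) := aux_CS P Q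
      _ ≤ (ENNReal.ofReal (δ^2/Real.pi^2 * K)) ^ ((1:ℝ)/2)
          * (∑' m : ℤ, φ (c m + ξ)) ^ ((1:ℝ)/2) := by
          rw [hsum2]
          exact mul_le_mul_left (ENNReal.rpow_le_rpow hsum1 (by norm_num)) _
  -- integral of the shifted weights
  have hΦ_lint : ∫⁻ ξ in Set.Icc (-A) A, (∑' m : ℤ, φ (c m + ξ)) ≤ ENNReal.ofReal (M^2) := by
    have hswap : ∫⁻ ξ in Set.Icc (-A) A, (∑' m : ℤ, φ (c m + ξ))
        = ∑' m : ℤ, ∫⁻ ξ in Set.Icc (-A) A, φ (c m + ξ) :=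
      lintegral_tsum (f := fun (m : ℤ) (ξ : ℝ) => φ (c m + ξ))
        (fun m => ((hφ_meas.comp (measurable_const_add (c m))).aemeasurable))
    rw [hswap]
    have himg : ∀ m : ℤ, ∫⁻ ξ in Set.Icc (-A) A, φ (c m + ξ)
        = ∫⁻ ζ in Set.Icc (c m - A) (c m + A), φ ζ := by
      intro m
      have h := (measurePreserving_add_left (volume : Measure ℝ) (c m)).setLIntegral_comp_emb
        (MeasurableEquiv.addLeft (c m)).measurableEmbedding φ (Set.Icc (-A) A)
      rw [h, Set.image_const_add_Icc]
      norm_num [sub_eq_add_neg]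
    have hdisj : Pairwise (Function.onFun Disjoint fun m : ℤ => Set.Icc (c m - A) (c m + A)) := by
      have key2 : ∀ m n : ℤ, m < n →
          Disjoint (Set.Icc (c m - A) (c m + A)) (Set.Icc (c n - A) (c n + A)) := by
        intro m n h
        apply Set.disjoint_left.2
        intro x hx1 hx2
        have h1 : (m:ℝ) + 1 ≤ (n:ℝ) := by exact_mod_cast h
        have h2 : c m + 2*Real.pi/δ ≤ c n := by
          rw [hcdef]
          simp only []
          rw [← add_div]
          gcongr
          nlinarith [Real.pi_pos]
        have hA2 : 2*A < 2*(Real.pi/δ) := by linarith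
        have h5 : 2*Real.pi/δ = 2*(Real.pi/δ) := by ring
        obtain ⟨ha, hb⟩ := hx1
        obtain ⟨hc', hd⟩ := hx2
        linarith
      intro m n hmn
      rcases lt_or_gt_of_ne hmn with h|h
      · exact key2 m n h
      · exact (key2 n m h).symm
    calc ∑' m : ℤ, ∫⁻ ξ in Set.Icc (-A) A, φ (c m + ξ)
        = ∑' m : ℤ, ∫⁻ ζ in Set.Icc (c m - A) (c m + A), φ ζ := tsum_congr himg
      _ = ∫⁻ ζ in ⋃ m : ℤ, Set.Icc (c m - A) (c m + A), φ ζ :=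
          (lintegral_iUnion (fun m => measurableSet_Icc) hdisj φ).symm
      _ ≤ ∫⁻ ζ, φ ζ := lintegral_mono' Measure.restrict_le_self le_rfl
      _ ≤ ENNReal.ofReal (M^2) := hφ_int
  -- bound the tail nnnorm sums by V
  have hstep : ∀ ξ : ℝ, |ξ| ≤ A →
      (∑' m : ℤ, (if m = 0 then 0 else (‖I m ξ‖₊ : ℝ≥0∞)))
        ≤ ENNReal.ofReal (Cf*Cg) * V ξ := by
    intro ξ hξ
    rw [hVdef]
    simp only []
    rw [← ENNReal.tsum_mul_left]
    refine ENNReal.tsum_le_tsum fun m => ?_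
    by_cases hm : m = 0
    · simp [hm]
    · simp only [if_neg hm]
      rw [show ((‖I m ξ‖₊ : ℝ≥0∞)) = ENNReal.ofReal ‖I m ξ‖ from (ofReal_norm _).symm, ← ENNReal.ofReal_mul (by positivity)]
      exact ENNReal.ofReal_le_ofReal (hI_bd m ξ hξ)
  set B : ℝ := δ^2/Real.pi^2 * K with hBdef
  have hB0 : 0 ≤ B := by positivity
  -- squared pointwise bound for the tail part
  have hVsq : ∀ ξ ∈ Set.Icc (-A) A,
      (ENNReal.ofReal (Cf*Cg) * V ξ)^(2:ℕ)
        ≤ ENNReal.ofReal ((Cf*Cg)^2 * B) * (∑' m : ℤ, φ (c m + ξ)) := by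
    intro ξ hξmem
    have hξ : |ξ| ≤ A := abs_le.2 ⟨hξmem.1, hξmem.2⟩
    calc (ENNReal.ofReal (Cf*Cg) * V ξ)^(2:ℕ)
        ≤ (ENNReal.ofReal (Cf*Cg) * ((ENNReal.ofReal B) ^ ((1:ℝ)/2)
            * (∑' m : ℤ, φ (c m + ξ)) ^ ((1:ℝ)/2)))^(2:ℕ) := by
          gcongr
          exact key ξ hξ
      _ = ENNReal.ofReal (Cf*Cg)^(2:ℕ) * ENNReal.ofReal B
            * (∑' m : ℤ, φ (c m + ξ)) := by
          rw [mul_pow, mul_pow, aux_half_sq, aux_half_sq, ← mul_assoc]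
      _ = ENNReal.ofReal ((Cf*Cg)^2 * B) * (∑' m : ℤ, φ (c m + ξ)) := by
          rw [← ENNReal.ofReal_pow (by positivity), ← ENNReal.ofReal_mul (by positivity)]
  -- integrated bound for the tail part
  have htail_int : ∫⁻ ξ in Set.Icc (-A) A, (ENNReal.ofReal (Cf*Cg) * V ξ)^(2:ℕ)
      ≤ ENNReal.ofReal ((Cf*Cg)^2 * B) * ENNReal.ofReal (M^2) := by
    calc ∫⁻ ξ in Set.Icc (-A) A, (ENNReal.ofReal (Cf*Cg) * V ξ)^(2:ℕ)
        ≤ ∫⁻ ξ in Set.Icc (-A) A,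
            ENNReal.ofReal ((Cf*Cg)^2 * B) * (∑' m : ℤ, φ (c m + ξ)) := by
          refine lintegral_mono_ae ?_
          filter_upwards [ae_restrict_mem measurableSet_Icc] with ξ hξ
          exact hVsq ξ hξ
      _ = ENNReal.ofReal ((Cf*Cg)^2 * B)
            * ∫⁻ ξ in Set.Icc (-A) A, (∑' m : ℤ, φ (c m + ξ)) :=
          lintegral_const_mul' _ _ ENNReal.ofReal_ne_top
      _ ≤ _ := mul_le_mul_right hΦ_lint _
  -- second conclusion
  have main2 : ∫⁻ ξ in Set.Icc (-A) A,
      (‖∑' m : ℤ, (if m = 0 then 0 else I m ξ)‖₊ : ℝ≥0∞) ^ 2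
        ≤ ENNReal.ofReal ((C * Cf * Cg * δ * M)^2) := by
    have hpt : ∀ ξ ∈ Set.Icc (-A) A,
        (‖∑' m : ℤ, (if m = 0 then 0 else I m ξ)‖₊ : ℝ≥0∞) ^ 2
          ≤ (ENNReal.ofReal (Cf*Cg) * V ξ)^(2:ℕ) := by
      intro ξ hξmem
      have hξ : |ξ| ≤ A := abs_le.2 ⟨hξmem.1, hξmem.2⟩
      gcongr
      refine le_trans (aux_enorm_tsum_le _) ?_
      refine le_trans (ENNReal.tsum_le_tsum (fun m => ?_)) (hstep ξ hξ)
      by_cases hm : m = 0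
      · simp [hm]
      · simp [hm]
    calc ∫⁻ ξ in Set.Icc (-A) A,
          (‖∑' m : ℤ, (if m = 0 then 0 else I m ξ)‖₊ : ℝ≥0∞) ^ 2
        ≤ ∫⁻ ξ in Set.Icc (-A) A, (ENNReal.ofReal (Cf*Cg) * V ξ)^(2:ℕ) := by
          refine lintegral_mono_ae ?_
          filter_upwards [ae_restrict_mem measurableSet_Icc] with ξ hξ
          exact hpt ξ hξ
      _ ≤ ENNReal.ofReal ((Cf*Cg)^2 * B) * ENNReal.ofReal (M^2) := htail_int
      _ ≤ ENNReal.ofReal ((C * Cf * Cg * δ * M)^2) := by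
          rw [← ENNReal.ofReal_mul (by positivity)]
          apply ENNReal.ofReal_le_ofReal
          have h5 : K/Real.pi^2 ≤ C^2 := by
            have h6 : K/Real.pi^2 ≤ K := by
              apply div_le_self hK0
              nlinarith
            linarith
          calc (Cf*Cg)^2 * B * M^2 = (K/Real.pi^2) * ((Cf*Cg*δ*M)^2) := by
                rw [hBdef]; ring
            _ ≤ C^2 * ((Cf*Cg*δ*M)^2) := mul_le_mul_of_nonneg_right h5 (by positivity)
            _ = (C*Cf*Cg*δ*M)^2 := by ring
  -- head term bound
  have hhead : ∫⁻ ξ in Set.Icc (-A) A,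
      (ENNReal.ofReal (Cf*Cg) * ENNReal.ofReal (S ξ))^(2:ℕ)
        ≤ ENNReal.ofReal ((Cf*Cg)^2) * ENNReal.ofReal (M^2) := by
    have hptS : ∀ ξ : ℝ, (ENNReal.ofReal (Cf*Cg) * ENNReal.ofReal (S ξ))^(2:ℕ)
        ≤ ENNReal.ofReal ((Cf*Cg)^2) * φ ξ := by
      intro ξ
      rw [mul_pow, ← ENNReal.ofReal_pow (by positivity), ← ENNReal.ofReal_pow (hS0 _)]
      refine mul_le_mul_right ?_ _
      rw [hφdef]
      simp only []
      apply ENNReal.ofReal_le_ofReal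
      nlinarith [hS0 ξ, sq_nonneg ξ, sq_nonneg (S ξ)]
    calc ∫⁻ ξ in Set.Icc (-A) A, (ENNReal.ofReal (Cf*Cg) * ENNReal.ofReal (S ξ))^(2:ℕ)
        ≤ ∫⁻ ξ in Set.Icc (-A) A, ENNReal.ofReal ((Cf*Cg)^2) * φ ξ :=
          lintegral_mono hptS
      _ = ENNReal.ofReal ((Cf*Cg)^2) * ∫⁻ ξ in Set.Icc (-A) A, φ ξ :=
          lintegral_const_mul' _ _ ENNReal.ofReal_ne_top
      _ ≤ ENNReal.ofReal ((Cf*Cg)^2) * ∫⁻ ξ, φ ξ :=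
          mul_le_mul_right (setLIntegral_le_lintegral _ _) _
      _ ≤ _ := mul_le_mul_right hφ_int _
  -- third conclusion
  have main3 : ∫⁻ ξ in Set.Icc (-A) A, (‖∑' m : ℤ, I m ξ‖₊ : ℝ≥0∞) ^ 2
      ≤ ENNReal.ofReal ((C * Cf * Cg * M)^2) := by
    have hpt : ∀ ξ ∈ Set.Icc (-A) A,
        (‖∑' m : ℤ, I m ξ‖₊ : ℝ≥0∞) ^ 2
          ≤ 4 * ((ENNReal.ofReal (Cf*Cg) * ENNReal.ofReal (S ξ))^(2:ℕ)
              + (ENNReal.ofReal (Cf*Cg) * V ξ)^(2:ℕ)) := by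
      intro ξ hξmem
      have hξ : |ξ| ≤ A := abs_le.2 ⟨hξmem.1, hξmem.2⟩
      have h1 : (‖∑' m : ℤ, I m ξ‖₊ : ℝ≥0∞)
          ≤ ENNReal.ofReal (Cf*Cg) * ENNReal.ofReal (S ξ)
            + ENNReal.ofReal (Cf*Cg) * V ξ := by
        refine le_trans (aux_enorm_tsum_le _) ?_
        rw [ENNReal.tsum_eq_add_tsum_ite 0]
        have hite : (∑' (x : ℤ), @ite ℝ≥0∞ (x = 0) (Classical.propDecidable (x = 0)) 0
            (‖I x ξ‖₊ : ℝ≥0∞)) = ∑' m : ℤ, (if m = 0 then 0 else (‖I m ξ‖₊ : ℝ≥0∞)) :=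
          tsum_congr fun m => by congr
        rw [hite]
        refine add_le_add ?_ (hstep ξ hξ)
        rw [show ((‖I 0 ξ‖₊ : ℝ≥0∞)) = ENNReal.ofReal ‖I 0 ξ‖ from (ofReal_norm _).symm, ← ENNReal.ofReal_mul (by positivity)]
        apply ENNReal.ofReal_le_ofReal
        have h2 := hI_bd 0 ξ hξ
        have hc0 : c 0 + ξ = ξ := by rw [hcdef]; simp
        rwa [hc0] at h2
      calc (‖∑' m : ℤ, I m ξ‖₊ : ℝ≥0∞) ^ 2
          ≤ (ENNReal.ofReal (Cf*Cg) * ENNReal.ofReal (S ξ)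
              + ENNReal.ofReal (Cf*Cg) * V ξ)^2 := by gcongr
        _ ≤ 4 * ((ENNReal.ofReal (Cf*Cg) * ENNReal.ofReal (S ξ))^(2:ℕ)
              + (ENNReal.ofReal (Cf*Cg) * V ξ)^(2:ℕ)) := aux_sq_add _ _
    have hmeas1 : Measurable fun ξ : ℝ =>
        (ENNReal.ofReal (Cf*Cg) * ENNReal.ofReal (S ξ))^(2:ℕ) :=
      (((ENNReal.measurable_ofReal.comp hS_cont.measurable).const_mul _).pow_const 2)
    calc ∫⁻ ξ in Set.Icc (-A) A, (‖∑' m : ℤ, I m ξ‖₊ : ℝ≥0∞) ^ 2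
        ≤ ∫⁻ ξ in Set.Icc (-A) A,
            4 * ((ENNReal.ofReal (Cf*Cg) * ENNReal.ofReal (S ξ))^(2:ℕ)
              + (ENNReal.ofReal (Cf*Cg) * V ξ)^(2:ℕ)) := by
          refine lintegral_mono_ae ?_
          filter_upwards [ae_restrict_mem measurableSet_Icc] with ξ hξ
          exact hpt ξ hξ
      _ = 4 * (∫⁻ ξ in Set.Icc (-A) A,
            ((ENNReal.ofReal (Cf*Cg) * ENNReal.ofReal (S ξ))^(2:ℕ)
              + (ENNReal.ofReal (Cf*Cg) * V ξ)^(2:ℕ))) := by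
          exact lintegral_const_mul' _ _ (by norm_num)
      _ = 4 * ((∫⁻ ξ in Set.Icc (-A) A,
            (ENNReal.ofReal (Cf*Cg) * ENNReal.ofReal (S ξ))^(2:ℕ))
            + ∫⁻ ξ in Set.Icc (-A) A, (ENNReal.ofReal (Cf*Cg) * V ξ)^(2:ℕ)) := by
          rw [lintegral_add_left hmeas1]
      _ ≤ 4 * ((ENNReal.ofReal ((Cf*Cg)^2) * ENNReal.ofReal (M^2))
            + ENNReal.ofReal ((Cf*Cg)^2 * B) * ENNReal.ofReal (M^2)) := by
          exact mul_le_mul_right (add_le_add hhead htail_int) _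
      _ ≤ ENNReal.ofReal ((C * Cf * Cg * M)^2) := by
          rw [← ENNReal.ofReal_mul (by positivity), ← ENNReal.ofReal_mul (by positivity),
            ← ENNReal.ofReal_add (by positivity) (by positivity),
            show (4:ℝ≥0∞) = ENNReal.ofReal 4 by norm_num,
            ← ENNReal.ofReal_mul (by norm_num)]
          apply ENNReal.ofReal_le_ofReal
          have hBK : B ≤ K := by
            rw [hBdef]
            have h7 : δ^2/Real.pi^2 ≤ 1 := by
              rw [div_le_one (by positivity)]
              nlinarith
            exact mul_le_of_le_one_left hK0 h7
          have hC4 : 4*(1+K) ≤ C^2 := by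
            rw [hCdef]
            nlinarith [Real.sq_sqrt hK0, Real.sqrt_nonneg K]
          calc 4*((Cf*Cg)^2*M^2 + (Cf*Cg)^2*B*M^2)
              = (4*(1+B)) * ((Cf*Cg*M)^2) := by ring
            _ ≤ (4*(1+K)) * ((Cf*Cg*M)^2) := by
                apply mul_le_mul_of_nonneg_right (by linarith) (by positivity)
            _ ≤ C^2 * ((Cf*Cg*M)^2) :=
                mul_le_mul_of_nonneg_right hC4 (by positivity)
            _ = (C*Cf*Cg*M)^2 := by ring
  -- first conclusion: a.e. summability
  have hmeasΦ : Measurable fun ξ : ℝ => ∑' m : ℤ, φ (c m + ξ) :=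
    Measurable.ennreal_tsum fun m => hφ_meas.comp (measurable_const_add (c m))
  have main1 : ∀ᵐ ξ ∂(volume.restrict (Set.Icc (-A) A)),
      Summable fun m : ℤ => ‖I m ξ‖ := by
    have hfin : ∀ᵐ ξ ∂(volume.restrict (Set.Icc (-A) A)),
        (∑' m : ℤ, φ (c m + ξ)) < ⊤ :=
      ae_lt_top hmeasΦ (lt_of_le_of_lt hΦ_lint ENNReal.ofReal_lt_top).ne
    filter_upwards [hfin, ae_restrict_mem measurableSet_Icc] with ξ hΦξ hξmem
    have hξ : |ξ| ≤ A := abs_le.2 ⟨hξmem.1, hξmem.2⟩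
    have hVfin : V ξ < ⊤ :=
      lt_of_le_of_lt (key ξ hξ)
        (ENNReal.mul_lt_top
          (ENNReal.rpow_lt_top_of_nonneg (by norm_num) ENNReal.ofReal_ne_top)
          (ENNReal.rpow_lt_top_of_nonneg (by norm_num) hΦξ.ne))
    have htot : (∑' m : ℤ, (‖I m ξ‖₊ : ℝ≥0∞)) < ⊤ := by
      rw [ENNReal.tsum_eq_add_tsum_ite 0]
      have hite : (∑' (x : ℤ), @ite ℝ≥0∞ (x = 0) (Classical.propDecidable (x = 0)) 0
          (‖I x ξ‖₊ : ℝ≥0∞)) = ∑' m : ℤ, (if m = 0 then 0 else (‖I m ξ‖₊ : ℝ≥0∞)) :=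
        tsum_congr fun m => by congr
      rw [hite]
      have hb : (∑' m : ℤ, (if m = 0 then 0 else (‖I m ξ‖₊:ℝ≥0∞))) < ⊤ :=
        lt_of_le_of_lt (hstep ξ hξ) (ENNReal.mul_lt_top ENNReal.ofReal_lt_top hVfin)
      exact ENNReal.add_lt_top.2 ⟨ENNReal.coe_lt_top, hb⟩
    have hsummNN : Summable fun m : ℤ => ‖I m ξ‖₊ :=
      ENNReal.tsum_coe_ne_top_iff_summable.1 htot.ne
    have hco := NNReal.summable_coe.2 hsummNN
    simpa [coe_nnnorm] using hco
  exact ⟨main1, main2, main3⟩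
end

section
/- Uniform L² bound for the diagonal lattice sums in the Poisson summation formula. For every ζ_max > 0 there is a constant C > 0, depending only on ζ_max, with the following property: for every Γ in ℍ² and every N ∈ ℕ, ∫₀¹ ∫_{−ζ_max}^{ζ_max} | ∑_{|n| ≤ N} e^{−iζ(x+n)} Γ(x, x+n) |² dζ dx ≤ C ‖Γ‖²_{ℍ²}. -/
set_option maxHeartbeats 2000000
open MeasureTheory Filter Complex intervalIntegral
open scoped ENNReal NNReal Real

lemma key_exp_int (M : ℕ) (k : ℤ) (hk : k ≠ 0) :
    ∫ ζ in (-(M*π) : ℝ)..(M*π : ℝ), Complex.exp ((-(Complex.I*(k:ℂ))) * (ζ:ℂ)) = 0 := by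
  have hc : -(Complex.I*(k:ℂ)) ≠ 0 := by
    simp [Complex.I_ne_zero, hk]
  rw [integral_exp_mul_complex hc]
  have e1 : (-(Complex.I*(k:ℂ))) * (((M*π : ℝ)):ℂ) = ((-(k*M) : ℤ):ℂ) * (π*Complex.I) := by
    push_cast; ring
  have e2 : (-(Complex.I*(k:ℂ))) * (((-(M*π) : ℝ)):ℂ) = (((k*M) : ℤ):ℂ) * (π*Complex.I) := by
    push_cast; ring
  rw [e1, e2, Complex.exp_int_mul, Complex.exp_int_mul, Complex.exp_pi_mul_I]
  have h1 : ((-1:ℂ)) ^ (-(k*M)) = ((-1:ℂ)) ^ (k*M) := by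
    rw [zpow_neg]
    refine inv_eq_of_mul_eq_one_right ?_
    rw [← mul_zpow]; norm_num
  rw [h1, sub_self, zero_div]

lemma cont_exp_int (n : ℤ) : Continuous fun ζ : ℝ => Complex.exp (-(Complex.I*(ζ:ℂ)*(n:ℂ))) := by
  fun_prop

lemma single_int (M : ℕ) (m n : ℤ) (c : ℂ) :
    (∫ ζ in (-(M*π):ℝ)..(M*π), c * Complex.exp ((-(Complex.I*(((m:ℂ) - (n:ℂ))))) * (ζ:ℂ)))
      = if m = n then c * ((2*M*π:ℝ):ℂ) else 0 := by
  rw [intervalIntegral.integral_const_mul]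
  by_cases hmn : m = n
  · subst hmn
    rw [if_pos rfl]
    have h1 : ∀ ζ : ℝ, Complex.exp ((-(Complex.I*(((m:ℂ) - (m:ℂ))))) * (ζ:ℂ)) = 1 := by
      intro ζ; simp
    rw [intervalIntegral.integral_congr (g := fun _ : ℝ => (1:ℂ)) (fun ζ _ => h1 ζ)]
    rw [intervalIntegral.integral_const, Complex.real_smul, mul_one]
    congr 1
    push_cast; ring
  · rw [if_neg hmn]
    have hcast : ((m:ℂ) - (n:ℂ)) = (((m - n : ℤ)):ℂ) := by push_cast; ring
    rw [hcast, key_exp_int M (m - n) (sub_ne_zero.mpr hmn), mul_zero]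

lemma parseval_c (M : ℕ) (s : Finset ℤ) (a : ℤ → ℂ) :
    (∫ ζ in (-(M*π):ℝ)..(M*π),
        ((∑ n ∈ s, Complex.exp (-(Complex.I*(ζ:ℂ)*(n:ℂ))) * a n) *
          (starRingEnd ℂ) (∑ n ∈ s, Complex.exp (-(Complex.I*(ζ:ℂ)*(n:ℂ))) * a n)))
      = (((2*M*π) * ∑ n ∈ s, ‖a n‖^2 : ℝ) : ℂ) := by
  have hint : ∀ (c k : ℂ), IntervalIntegrable (fun ζ : ℝ => c * Complex.exp (k * (ζ:ℂ)))
      MeasureTheory.volume (-(M*π):ℝ) (M*π) := by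
    intro c k
    exact (continuous_const.mul
      (by fun_prop : Continuous fun ζ : ℝ => Complex.exp (k * (ζ:ℂ)))).intervalIntegrable _ _
  have hexp : ∀ ζ : ℝ, ((∑ n ∈ s, Complex.exp (-(Complex.I*(ζ:ℂ)*(n:ℂ))) * a n) *
          (starRingEnd ℂ) (∑ n ∈ s, Complex.exp (-(Complex.I*(ζ:ℂ)*(n:ℂ))) * a n))
      = ∑ m ∈ s, ∑ n ∈ s,
          (a m * (starRingEnd ℂ) (a n)) *
            Complex.exp ((-(Complex.I*(((m:ℂ) - (n:ℂ))))) * (ζ:ℂ)) := by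
    intro ζ
    simp only [map_sum, Finset.sum_mul_sum]
    refine Finset.sum_congr rfl fun m _ => Finset.sum_congr rfl fun n _ => ?_
    rw [map_mul, ← Complex.exp_conj, ← mul_assoc]
    have h2 : Complex.exp (-(Complex.I*(ζ:ℂ)*(m:ℂ))) * a m *
          Complex.exp ((starRingEnd ℂ) (-(Complex.I*(ζ:ℂ)*(n:ℂ))))
        = (a m) * (Complex.exp (-(Complex.I*(ζ:ℂ)*(m:ℂ))) *
            Complex.exp ((starRingEnd ℂ) (-(Complex.I*(ζ:ℂ)*(n:ℂ))))) := by ring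
    rw [h2, ← Complex.exp_add]
    have harg : -(Complex.I*(ζ:ℂ)*(m:ℂ)) + (starRingEnd ℂ) (-(Complex.I*(ζ:ℂ)*(n:ℂ)))
        = (-(Complex.I*(((m:ℂ) - (n:ℂ))))) * (ζ:ℂ) := by
      simp only [map_neg, map_mul, Complex.conj_I, Complex.conj_ofReal, map_intCast]
      ring
    rw [harg]; ring
  have hint2 : ∀ m ∈ s, IntervalIntegrable (fun ζ : ℝ => ∑ n ∈ s,
          (a m * (starRingEnd ℂ) (a n)) *
            Complex.exp ((-(Complex.I*(((m:ℂ) - (n:ℂ))))) * (ζ:ℂ)))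
        MeasureTheory.volume (-(M*π):ℝ) (M*π) := by
    intro m _
    exact (continuous_finset_sum s (fun n _ => continuous_const.mul
      (by fun_prop : Continuous fun ζ : ℝ =>
        Complex.exp ((-(Complex.I*(((m:ℂ) - (n:ℂ))))) * (ζ:ℂ))))).intervalIntegrable _ _
  calc (∫ ζ in (-(M*π):ℝ)..(M*π),
        ((∑ n ∈ s, Complex.exp (-(Complex.I*(ζ:ℂ)*(n:ℂ))) * a n) *
          (starRingEnd ℂ) (∑ n ∈ s, Complex.exp (-(Complex.I*(ζ:ℂ)*(n:ℂ))) * a n)))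
      = ∫ ζ in (-(M*π):ℝ)..(M*π), ∑ m ∈ s, ∑ n ∈ s,
          (a m * (starRingEnd ℂ) (a n)) *
            Complex.exp ((-(Complex.I*(((m:ℂ) - (n:ℂ))))) * (ζ:ℂ)) :=
        intervalIntegral.integral_congr (fun ζ _ => hexp ζ)
    _ = ∑ m ∈ s, ∫ ζ in (-(M*π):ℝ)..(M*π), ∑ n ∈ s,
          (a m * (starRingEnd ℂ) (a n)) *
            Complex.exp ((-(Complex.I*(((m:ℂ) - (n:ℂ))))) * (ζ:ℂ)) :=
        intervalIntegral.integral_finset_sum hint2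
    _ = ∑ m ∈ s, ∑ n ∈ s, ∫ ζ in (-(M*π):ℝ)..(M*π),
          (a m * (starRingEnd ℂ) (a n)) *
            Complex.exp ((-(Complex.I*(((m:ℂ) - (n:ℂ))))) * (ζ:ℂ)) :=
        Finset.sum_congr rfl
          (fun m _ => intervalIntegral.integral_finset_sum (fun n _ => hint _ _))
    _ = ∑ m ∈ s, ∑ n ∈ s,
          if m = n then (a m * (starRingEnd ℂ) (a n)) * ((2*M*π:ℝ):ℂ) else 0 :=
        Finset.sum_congr rfl (fun m _ => Finset.sum_congr rfl
          (fun n _ => single_int M m n _))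
    _ = ∑ m ∈ s, (a m * (starRingEnd ℂ) (a m)) * ((2*M*π:ℝ):ℂ) := by
        refine Finset.sum_congr rfl fun m hm => ?_
        rw [Finset.sum_ite_eq s m (fun n => (a m * (starRingEnd ℂ) (a n)) * ((2*M*π:ℝ):ℂ)),
          if_pos hm]
    _ = (((2*M*π) * ∑ n ∈ s, ‖a n‖^2 : ℝ) : ℂ) := by
        push_cast
        rw [Finset.mul_sum]
        refine Finset.sum_congr rfl fun m _ => ?_
        rw [Complex.mul_conj]
        rw [Complex.normSq_eq_norm_sq]
        push_cast; ring

lemma parseval_lintegral (M : ℕ) (s : Finset ℤ) (a : ℤ → ℂ) :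
    (∫⁻ ζ in Set.Icc (-(M*π):ℝ) (M*π),
        ENNReal.ofReal (‖∑ n ∈ s, Complex.exp (-(Complex.I*(ζ:ℂ)*(n:ℂ))) * a n‖^2))
      = ENNReal.ofReal ((2*M*π) * ∑ n ∈ s, ‖a n‖^2) := by
  have hle : (-(M*π):ℝ) ≤ (M*π) := by
    have : (0:ℝ) ≤ M*π := by positivity
    linarith
  set S : ℝ → ℂ := fun ζ => ∑ n ∈ s, Complex.exp (-(Complex.I*(ζ:ℂ)*(n:ℂ))) * a n with hS
  have hScont : Continuous S := by
    apply continuous_finset_sum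
    intro n _
    exact (cont_exp_int n).mul continuous_const
  have hcont : Continuous fun ζ : ℝ => ‖S ζ‖^2 := (hScont.norm).pow 2
  have hInt : IntegrableOn (fun ζ : ℝ => ‖S ζ‖^2) (Set.Icc (-(M*π):ℝ) (M*π)) := by
    exact hcont.integrableOn_Icc
  rw [← ofReal_integral_eq_lintegral_ofReal hInt
    (Filter.Eventually.of_forall (fun ζ => by positivity))]
  congr 1
  have hreal : (∫ ζ in (-(M*π):ℝ)..(M*π), ‖S ζ‖^2) = (2*M*π) * ∑ n ∈ s, ‖a n‖^2 := by
    have hpt : ∀ ζ : ℝ, ((‖S ζ‖^2 : ℝ) : ℂ) = S ζ * (starRingEnd ℂ) (S ζ) := by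
      intro ζ
      rw [Complex.mul_conj, Complex.normSq_eq_norm_sq]
      try push_cast
      try ring
    have h2 : (∫ ζ in (-(M*π):ℝ)..(M*π), ((‖S ζ‖^2 : ℝ) : ℂ))
        = (((2*M*π) * ∑ n ∈ s, ‖a n‖^2 : ℝ) : ℂ) := by
      rw [intervalIntegral.integral_congr (g := fun ζ => S ζ * (starRingEnd ℂ) (S ζ))
        (fun ζ _ => hpt ζ)]
      exact parseval_c M s a
    rw [intervalIntegral.integral_ofReal] at h2
    exact_mod_cast h2
  rw [MeasureTheory.integral_Icc_eq_integral_Ioc, ← intervalIntegral.integral_of_le hle]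
  exact hreal

lemma sobolev_pt (f : ℝ → ℂ) (hf : ContDiff ℝ 1 f) {x : ℝ} (hx : x ∈ Set.Icc (0:ℝ) 1) :
    ‖f x‖^2 ≤ 2 * (∫ t in (0:ℝ)..1, ‖f t‖^2) + ∫ t in (0:ℝ)..1, ‖deriv f t‖^2 := by
  set φ : ℝ → ℝ := fun t => ‖f t‖^2 with hφ
  set ψ : ℝ → ℝ := fun t => 2 * (((starRingEnd ℂ) (f t)) * deriv f t).re with hψ
  have hfc : Continuous f := hf.continuous
  have hfd : Continuous (deriv f) := hf.continuous_deriv le_rfl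
  have hφc : Continuous φ := (hfc.norm).pow 2
  have hψc : Continuous ψ := by
    apply Continuous.mul continuous_const
    exact Complex.continuous_re.comp ((Complex.continuous_conj.comp hfc).mul hfd)
  have hder : ∀ t : ℝ, HasDerivAt φ (ψ t) t := by
    intro t
    have hft : HasDerivAt f (deriv f t) t :=
      (hf.differentiable one_ne_zero t).hasDerivAt
    have hre : HasDerivAt (fun u => (f u).re) ((deriv f t).re) t := by
      exact Complex.reCLM.hasFDerivAt.comp_hasDerivAt t hft
    have him : HasDerivAt (fun u => (f u).im) ((deriv f t).im) t := by
      exact Complex.imCLM.hasFDerivAt.comp_hasDerivAt t hft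
    have h1 : HasDerivAt (fun u => (f u).re^2 + (f u).im^2)
        ((2:ℕ) * (f t).re^1 * (deriv f t).re + (2:ℕ) * (f t).im^1 * (deriv f t).im) t :=
      (hre.pow 2).add (him.pow 2)
    have heq : (fun u => (f u).re^2 + (f u).im^2) = φ := by
      funext u
      rw [hφ]
      simp only []
      rw [Complex.sq_norm, Complex.normSq_apply]
      ring
    rw [heq] at h1
    convert h1 using 1
    rw [hψ]
    simp only [Complex.mul_re, Complex.conj_re, Complex.conj_im]
    push_cast
    ring
  have key : ∀ y ∈ Set.Icc (0:ℝ) 1, φ x - φ y ≤ ∫ t in (0:ℝ)..1, |ψ t| := by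
    intro y hy
    have hftc : φ x - φ y = ∫ t in y..x, ψ t := by
      rw [intervalIntegral.integral_eq_sub_of_hasDerivAt (fun t _ => hder t)
        (hψc.intervalIntegrable _ _)]
    rw [hftc]
    have h1 : (∫ t in y..x, ψ t) ≤ |∫ t in y..x, ψ t| := le_abs_self _
    have h2 : |∫ t in y..x, ψ t| ≤ |(∫ t in y..x, |ψ t|)|  := by
      simpa [Real.norm_eq_abs] using
        intervalIntegral.norm_integral_le_abs_integral_norm (f := ψ) (a := y) (b := x)
          (μ := volume)
    have h3 : |(∫ t in y..x, |ψ t|)| ≤ ∫ t in (0:ℝ)..1, |ψ t| := by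
      rcases le_total y x with hyx | hxy
      · rw [_root_.abs_of_nonneg (intervalIntegral.integral_nonneg hyx (fun t _ => abs_nonneg _))]
        exact intervalIntegral.integral_mono_interval hy.1 hyx hx.2
          (Filter.Eventually.of_forall fun t => abs_nonneg _)
          ((hψc.abs).intervalIntegrable _ _)
      · rw [intervalIntegral.integral_symm, abs_neg,
          _root_.abs_of_nonneg (intervalIntegral.integral_nonneg hxy (fun t _ => abs_nonneg _))]
        exact intervalIntegral.integral_mono_interval hx.1 hxy hy.2
          (Filter.Eventually.of_forall fun t => abs_nonneg _)
          ((hψc.abs).intervalIntegrable _ _)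
    linarith
  set D : ℝ := ∫ t in (0:ℝ)..1, |ψ t| with hD
  have havg : φ x - D ≤ ∫ y in (0:ℝ)..1, φ y := by
    have h1 : (∫ _ in (0:ℝ)..1, (φ x - D)) ≤ ∫ y in (0:ℝ)..1, φ y := by
      apply intervalIntegral.integral_mono_on (by norm_num)
        (intervalIntegrable_const) (hφc.intervalIntegrable _ _)
      intro y hy
      linarith [key y hy]
    simpa using h1
  have hfx : ‖f x‖^2 = φ x := rfl
  have hDb : D ≤ (∫ t in (0:ℝ)..1, φ t) + ∫ t in (0:ℝ)..1, ‖deriv f t‖^2 := by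
    rw [hD, ← intervalIntegral.integral_add (g := fun t => ‖deriv f t‖^2) (hφc.intervalIntegrable _ _)
      (((hfd.norm).pow 2 : Continuous fun t => ‖deriv f t‖^2).intervalIntegrable _ _)]
    apply intervalIntegral.integral_mono_on (by norm_num)
      ((hψc.abs).intervalIntegrable _ _)
      ((hφc.add ((hfd.norm).pow 2)).intervalIntegrable _ _)
    intro t _
    have : |ψ t| ≤ 2 * (‖f t‖ * ‖deriv f t‖) := by
      rw [hψ]
      simp only []
      rw [abs_mul, _root_.abs_two]
      gcongr
      calc |(((starRingEnd ℂ) (f t)) * deriv f t).re| ≤ ‖((starRingEnd ℂ) (f t)) * deriv f t‖ :=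
            Complex.abs_re_le_norm _
        _ = ‖f t‖ * ‖deriv f t‖ := by
            rw [norm_mul, Complex.norm_conj]
    have h2 : 2 * (‖f t‖ * ‖deriv f t‖) ≤ ‖f t‖^2 + ‖deriv f t‖^2 := by
      rw [← mul_assoc]
      exact two_mul_le_add_sq _ _
    have h3 : φ t = ‖f t‖^2 := rfl
    show |ψ t| ≤ ‖f t‖^2 + ‖deriv f t‖^2
    linarith
  linarith

-- translation of set lintegral
lemma shift_lintegral (K : ℝ → ℝ≥0∞) (n : ℝ) :
    ∫⁻ x in Set.Ico (0:ℝ) 1, K (x + n) = ∫⁻ X in Set.Ico n (n+1), K X := by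
  have e : ℝ ≃ᵐ ℝ := (Homeomorph.addRight n).toMeasurableEquiv
  have hmap : (volume.restrict (Set.Ico (0:ℝ) 1)).map (fun x : ℝ => x + n)
      = volume.restrict (Set.Ico n (n+1)) := by
    have hpre : (fun x : ℝ => x + n) ⁻¹' (Set.Ico n (n+1)) = Set.Ico (0:ℝ) 1 := by
      ext x
      simp only [Set.mem_preimage, Set.mem_Ico]
      constructor
      · rintro ⟨h1, h2⟩; constructor <;> linarith
      · rintro ⟨h1, h2⟩; constructor <;> linarith
    have := MeasureTheory.Measure.restrict_map (measurable_add_const n)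
      (measurableSet_Ico : MeasurableSet (Set.Ico n (n+1))) (μ := volume)
    rw [map_add_right_eq_self volume n] at this
    rw [this, hpre]
  calc ∫⁻ x in Set.Ico (0:ℝ) 1, K (x + n)
      = ∫⁻ x, K ((Homeomorph.addRight n).toMeasurableEquiv x)
          ∂(volume.restrict (Set.Ico (0:ℝ) 1)) := rfl
    _ = ∫⁻ X, K X ∂((volume.restrict (Set.Ico (0:ℝ) 1)).map
          (Homeomorph.addRight n).toMeasurableEquiv) :=
        (MeasureTheory.lintegral_map_equiv K _).symm
    _ = ∫⁻ X in Set.Ico n (n+1), K X := by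
        have h2 : ((volume.restrict (Set.Ico (0:ℝ) 1)).map
            (Homeomorph.addRight n).toMeasurableEquiv)
            = (volume.restrict (Set.Ico (0:ℝ) 1)).map (fun x : ℝ => x + n) := rfl
        rw [h2, hmap]

/-- Uniform L² bound for the diagonal lattice sums in the Poisson summation formula. -/
theorem diagonal_lattice_sum_L2_bound (ζmax : ℝ) (hζmax : 0 < ζmax) :
    ∃ C > (0:ℝ), ∀ Γ : ℝ → ℝ → ℂ,
      (Continuous fun p : ℝ × ℝ => Γ p.1 p.2) →
      (∀ x X : ℝ, Γ (x + 1) X = Γ x X) →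
      (∀ X : ℝ, ContDiff ℝ 2 fun x => Γ x X) →
      (∀ j : ℕ, j ≤ 2 → Integrable
        (fun p : ℝ × ℝ => ‖iteratedDeriv j (fun y => Γ y p.2) p.1‖ ^ 2)
        ((volume.restrict (Set.Icc (0:ℝ) 1)).prod volume)) →
      ∀ N : ℕ,
        (∫⁻ x in Set.Icc (0:ℝ) 1, ∫⁻ ζ in Set.Icc (-ζmax) ζmax,
          (‖∑ n ∈ Finset.Icc (-(N:ℤ)) (N:ℤ),
              Complex.exp (-(Complex.I * (ζ : ℂ) * ((x + n : ℝ) : ℂ))) * Γ x (x + n)‖₊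
            : ℝ≥0∞) ^ 2)
          ≤ ENNReal.ofReal (C * ∑ j ∈ Finset.range 3,
              ∫ x in Set.Icc (0:ℝ) 1, ∫ X : ℝ, ‖iteratedDeriv j (fun y => Γ y X) x‖ ^ 2) := by
  set M : ℕ := ⌈ζmax / π⌉₊ + 1 with hM
  refine ⟨4*(M*π), by positivity, ?_⟩
  intro Γ hΓc hper hΓd hIntg N
  set s : Finset ℤ := Finset.Icc (-(N:ℤ)) (N:ℤ) with hs
  set μ : Measure ℝ := volume.restrict (Set.Icc (0:ℝ) 1) with hμ
  -- the inner bound, Step 1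
  have hZle : ζmax ≤ M * π := by
    have h1 : ζmax / π ≤ ⌈ζmax / π⌉₊ := Nat.le_ceil _
    have h2 : (⌈ζmax / π⌉₊ : ℝ) ≤ M := by
      rw [hM]; push_cast; linarith
    have hπ : (0:ℝ) < π := Real.pi_pos
    calc ζmax = (ζmax / π) * π := by field_simp
      _ ≤ (M:ℝ) * π := by
          apply mul_le_mul_of_nonneg_right _ hπ.le
          linarith
  have step1 : ∀ x : ℝ,
      (∫⁻ ζ in Set.Icc (-ζmax) ζmax,
        (‖∑ n ∈ s, Complex.exp (-(Complex.I * (ζ : ℂ) * ((x + n : ℝ) : ℂ))) * Γ x (x + n)‖₊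
          : ℝ≥0∞) ^ 2)
      ≤ ENNReal.ofReal ((2*M*π) * ∑ n ∈ s, ‖Γ x (x + n)‖^2) := by
    intro x
    have hnorm : ∀ ζ : ℝ,
        ((‖∑ n ∈ s, Complex.exp (-(Complex.I * (ζ : ℂ) * ((x + n : ℝ) : ℂ))) * Γ x (x + n)‖₊
          : ℝ≥0∞)) ^ 2
        = ENNReal.ofReal
            (‖∑ n ∈ s, Complex.exp (-(Complex.I*(ζ:ℂ)*(n:ℂ))) * Γ x (x + n)‖^2) := by
      intro ζ
      have hsum : (∑ n ∈ s, Complex.exp (-(Complex.I * (ζ : ℂ) * ((x + n : ℝ) : ℂ))) * Γ x (x + n))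
          = Complex.exp (-(Complex.I*(ζ:ℂ)*(x:ℂ))) *
              ∑ n ∈ s, Complex.exp (-(Complex.I*(ζ:ℂ)*(n:ℂ))) * Γ x (x + n) := by
        rw [Finset.mul_sum]
        refine Finset.sum_congr rfl fun n _ => ?_
        have hc : ((x + (n:ℤ) : ℝ) : ℂ) = (x:ℂ) + (n:ℂ) := by push_cast; ring
        rw [hc, ← mul_assoc, ← Complex.exp_add]
        congr 2
        ring
      rw [hsum]
      have h1 : ‖Complex.exp (-(Complex.I*(ζ:ℂ)*(x:ℂ)))‖ = 1 := by
        rw [Complex.norm_exp]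
        simp [Complex.exp_re]
      have h1' : (‖Complex.exp (-(Complex.I*(ζ:ℂ)*(x:ℂ)))‖₊ : ℝ≥0) = 1 :=
        NNReal.coe_inj.mp (by rw [coe_nnnorm, h1, NNReal.coe_one])
      rw [ENNReal.ofReal_pow (norm_nonneg _), ofReal_norm, enorm_eq_nnnorm, nnnorm_mul, h1', one_mul]
    calc (∫⁻ ζ in Set.Icc (-ζmax) ζmax,
          (‖∑ n ∈ s, Complex.exp (-(Complex.I * (ζ : ℂ) * ((x + n : ℝ) : ℂ))) * Γ x (x + n)‖₊
            : ℝ≥0∞) ^ 2)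
        = ∫⁻ ζ in Set.Icc (-ζmax) ζmax, ENNReal.ofReal
            (‖∑ n ∈ s, Complex.exp (-(Complex.I*(ζ:ℂ)*(n:ℂ))) * Γ x (x + n)‖^2) :=
          lintegral_congr fun ζ => hnorm ζ
      _ ≤ ∫⁻ ζ in Set.Icc (-(M*π):ℝ) (M*π), ENNReal.ofReal
            (‖∑ n ∈ s, Complex.exp (-(Complex.I*(ζ:ℂ)*(n:ℂ))) * Γ x (x + n)‖^2) := by
          refine lintegral_mono' (Measure.restrict_mono ?_ le_rfl) le_rfl
          intro ζ hζ
          rcases hζ with ⟨h1, h2⟩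
          exact ⟨by linarith, by linarith⟩
      _ = ENNReal.ofReal ((2*M*π) * ∑ n ∈ s, ‖Γ x (x + n)‖^2) :=
          parseval_lintegral M s (fun n => Γ x (x + (n:ℝ)))
  
  -- families
  set F : ℕ → ℝ × ℝ → ℝ≥0∞ :=
    fun j p => ENNReal.ofReal (‖iteratedDeriv j (fun y => Γ y p.2) p.1‖^2) with hF
  have hFmeas : ∀ j, j ≤ 2 → AEMeasurable (F j) (μ.prod volume) := fun j hj =>
    ((hIntg j hj).aestronglyMeasurable.aemeasurable).ennreal_ofReal
  set J : ℕ → ℝ≥0∞ := fun j => ∫⁻ p, F j p ∂(μ.prod volume) with hJ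
  set Abar : ℝ → ℝ≥0∞ := fun X => ∫⁻ t, F 0 (t, X) ∂μ with hAbar
  set Bbar : ℝ → ℝ≥0∞ := fun X => ∫⁻ t, F 1 (t, X) ∂μ with hBbar
  have hFreq0 : ∀ t X : ℝ, F 0 (t,X) = ENNReal.ofReal (‖Γ t X‖^2) := by
    intro t X; simp only [hF, iteratedDeriv_zero]
  have hFreq1 : ∀ t X : ℝ, F 1 (t,X) = ENNReal.ofReal (‖deriv (fun y => Γ y X) t‖^2) := by
    intro t X; simp only [hF, iteratedDeriv_one]
  have hcontX : ∀ X : ℝ, Continuous (fun t => Γ t X) := by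
    intro X; exact (hΓd X).continuous
  have hcontD : ∀ X : ℝ, Continuous (deriv (fun y => Γ y X)) := by
    intro X; exact (hΓd X).continuous_deriv (by norm_num)
  -- interval integral to lintegral over μ
  have intv_eq : ∀ (g : ℝ → ℝ), Continuous g → (∀ t, 0 ≤ g t) →
      ENNReal.ofReal (∫ t in (0:ℝ)..1, g t) = ∫⁻ t in Set.Ioc (0:ℝ) 1, ENNReal.ofReal (g t) := by
    intro g hg hgn
    rw [intervalIntegral.integral_of_le zero_le_one]
    exact ofReal_integral_eq_lintegral_ofReal
      (hg.integrableOn_Icc.mono_set Set.Ioc_subset_Icc_self)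
      (Filter.Eventually.of_forall (fun t => hgn t))
  have intv_le : ∀ (g : ℝ → ℝ), Continuous g → (∀ t, 0 ≤ g t) →
      ENNReal.ofReal (∫ t in (0:ℝ)..1, g t) ≤ ∫⁻ t, ENNReal.ofReal (g t) ∂μ := by
    intro g hg hgn
    rw [intv_eq g hg hgn, hμ]
    exact lintegral_mono' (Measure.restrict_mono Set.Ioc_subset_Icc_self le_rfl) le_rfl
  -- sobolev pointwise
  have sobolev : ∀ X : ℝ, ∀ x ∈ Set.Icc (0:ℝ) 1,
      ENNReal.ofReal (‖Γ x X‖^2) ≤ 2 * Abar X + Bbar X := by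
    intro X x hx
    have hb := sobolev_pt (fun y => Γ y X) ((hΓd X).of_le (by norm_num)) hx
    calc ENNReal.ofReal (‖Γ x X‖^2)
        ≤ ENNReal.ofReal (2 * (∫ t in (0:ℝ)..1, ‖Γ t X‖^2)
            + ∫ t in (0:ℝ)..1, ‖deriv (fun y => Γ y X) t‖^2) := ENNReal.ofReal_le_ofReal hb
      _ ≤ ENNReal.ofReal (2 * (∫ t in (0:ℝ)..1, ‖Γ t X‖^2))
            + ENNReal.ofReal (∫ t in (0:ℝ)..1, ‖deriv (fun y => Γ y X) t‖^2) :=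
          ENNReal.ofReal_add_le
      _ ≤ 2 * Abar X + Bbar X := by
          refine add_le_add ?_ ?_
          · rw [ENNReal.ofReal_mul (by norm_num : (0:ℝ) ≤ 2)]
            have h2 : ENNReal.ofReal (2:ℝ) = 2 := by norm_num
            rw [h2]
            refine mul_le_mul_right ?_ _
            refine le_trans (intv_le _ ((hcontX X).norm.pow 2) (fun t => by positivity)) ?_
            rw [hAbar]
            refine lintegral_mono fun t => ?_
            rw [hFreq0]
          · refine le_trans (intv_le _ ((hcontD X).norm.pow 2) (fun t => by positivity)) ?_
            rw [hBbar]
            refine lintegral_mono fun t => ?_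
            rw [hFreq1]
  -- measurable versions
  have hF0 := hFmeas 0 (by norm_num)
  have hF1 := hFmeas 1 (by norm_num)
  set G0 : ℝ × ℝ → ℝ≥0∞ := hF0.mk (F 0) with hG0
  set G1 : ℝ × ℝ → ℝ≥0∞ := hF1.mk (F 1) with hG1
  have hG0m : Measurable G0 := hF0.measurable_mk
  have hG1m : Measurable G1 := hF1.measurable_mk
  have hswap : ∀ (Fj Gj : ℝ × ℝ → ℝ≥0∞), Fj =ᵐ[μ.prod volume] Gj →
      ∀ᵐ X ∂(volume : Measure ℝ), ∀ᵐ t ∂μ, Fj (t, X) = Gj (t, X) := by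
    intro Fj Gj h
    have h2 : ∀ᵐ q ∂((volume : Measure ℝ).prod μ), Fj (Prod.swap q) = Gj (Prod.swap q) :=
      (MeasureTheory.Measure.measurePreserving_swap).quasiMeasurePreserving.ae h
    exact MeasureTheory.Measure.ae_ae_of_ae_prod h2
  set Atil : ℝ → ℝ≥0∞ := fun X => ∫⁻ t, G0 (t, X) ∂μ with hAtil
  set Btil : ℝ → ℝ≥0∞ := fun X => ∫⁻ t, G1 (t, X) ∂μ with hBtil
  have hAtilm : Measurable Atil := hG0m.lintegral_prod_left'
  have hBtilm : Measurable Btil := hG1m.lintegral_prod_left'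
  have hAae : Abar =ᵐ[(volume : Measure ℝ)] Atil := by
    filter_upwards [hswap _ _ hF0.ae_eq_mk] with X hX
    exact lintegral_congr_ae hX
  have hBae : Bbar =ᵐ[(volume : Measure ℝ)] Btil := by
    filter_upwards [hswap _ _ hF1.ae_eq_mk] with X hX
    exact lintegral_congr_ae hX
  have hJ0 : J 0 = ∫⁻ X, Atil X ∂volume :=
    (MeasureTheory.lintegral_prod_symm (F 0) hF0).trans (lintegral_congr_ae hAae)
  have hJ1 : J 1 = ∫⁻ X, Btil X ∂volume :=
    (MeasureTheory.lintegral_prod_symm (F 1) hF1).trans (lintegral_congr_ae hBae)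
  
  have hdisj : Set.PairwiseDisjoint (↑s : Set ℤ) (fun n : ℤ => Set.Ico ((n:ℝ)) ((n:ℝ)+1)) :=
    (Set.pairwise_disjoint_Ico_intCast ℝ).set_pairwise _
  have hq_ae : ∀ n : ℤ, (fun x : ℝ => 2 * Abar (x + (n:ℝ)) + Bbar (x + (n:ℝ)))
      =ᵐ[volume.restrict (Set.Ico (0:ℝ) 1)]
      (fun x => 2 * Atil (x + (n:ℝ)) + Btil (x + (n:ℝ))) := by
    intro n
    have hq : Measure.QuasiMeasurePreserving (fun x : ℝ => x + (n:ℝ))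
        (volume.restrict (Set.Ico (0:ℝ) 1)) volume := by
      refine ⟨measurable_add_const _, ?_⟩
      have hle : (volume.restrict (Set.Ico (0:ℝ) 1)).map (fun x : ℝ => x + (n:ℝ))
          ≤ volume.map (fun x : ℝ => x + (n:ℝ)) :=
        Measure.map_mono Measure.restrict_le_self (measurable_add_const _)
      rw [map_add_right_eq_self volume ((n:ℝ))] at hle
      exact Measure.absolutelyContinuous_of_le hle
    have h1 := hq.ae_eq hAae
    have h2 := hq.ae_eq hBae
    filter_upwards [h1, h2] with x hx1 hx2
    simp only [Function.comp] at hx1 hx2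
    simp only [hx1, hx2]
  have bigsum_ae : (fun x : ℝ => ∑ n ∈ s, (2 * Abar (x + (n:ℝ)) + Bbar (x + (n:ℝ))))
      =ᵐ[volume.restrict (Set.Ico (0:ℝ) 1)]
      (fun x => ∑ n ∈ s, (2 * Atil (x + (n:ℝ)) + Btil (x + (n:ℝ)))) := by
    have hall : ∀ᵐ x ∂(volume.restrict (Set.Ico (0:ℝ) 1)), ∀ n ∈ s,
        2 * Abar (x + (n:ℝ)) + Bbar (x + (n:ℝ))
          = 2 * Atil (x + (n:ℝ)) + Btil (x + (n:ℝ)) :=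
      (Filter.eventually_all_finset s).mpr (fun n _ => hq_ae n)
    filter_upwards [hall] with x hx
    exact Finset.sum_congr rfl (fun n hn => hx n hn)
  have hKmeas : ∀ n : ℤ, Measurable fun x : ℝ => 2 * Atil (x + (n:ℝ)) + Btil (x + (n:ℝ)) := by
    intro n
    have h1 : Measurable fun x : ℝ => Atil (x + (n:ℝ)) := hAtilm.comp (measurable_add_const _)
    have h2 : Measurable fun x : ℝ => Btil (x + (n:ℝ)) := hBtilm.comp (measurable_add_const _)
    exact (h1.const_mul 2).add h2
  have main2 : (∫⁻ x in Set.Icc (0:ℝ) 1,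
        ENNReal.ofReal ((2*M*π) * ∑ n ∈ s, ‖Γ x (x + (n:ℝ))‖^2))
      ≤ ENNReal.ofReal (2*M*π) * (2 * J 0 + J 1) := by
    calc (∫⁻ x in Set.Icc (0:ℝ) 1,
          ENNReal.ofReal ((2*M*π) * ∑ n ∈ s, ‖Γ x (x + (n:ℝ))‖^2))
        ≤ ∫⁻ x in Set.Icc (0:ℝ) 1, ENNReal.ofReal (2*M*π) *
            ∑ n ∈ s, (2 * Abar (x + (n:ℝ)) + Bbar (x + (n:ℝ))) := by
          refine lintegral_mono_ae ?_
          filter_upwards [ae_restrict_mem measurableSet_Icc] with x hx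
          rw [ENNReal.ofReal_mul (by positivity)]
          refine mul_le_mul_right ?_ _
          calc ENNReal.ofReal (∑ n ∈ s, ‖Γ x (x + (n:ℝ))‖^2)
              = ∑ n ∈ s, ENNReal.ofReal (‖Γ x (x + (n:ℝ))‖^2) :=
                ENNReal.ofReal_sum_of_nonneg (fun n _ => by positivity)
            _ ≤ ∑ n ∈ s, (2 * Abar (x + (n:ℝ)) + Bbar (x + (n:ℝ))) :=
                Finset.sum_le_sum (fun n _ => sobolev (x + (n:ℝ)) x hx)
      _ = ENNReal.ofReal (2*M*π) * ∫⁻ x in Set.Icc (0:ℝ) 1,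
            ∑ n ∈ s, (2 * Abar (x + (n:ℝ)) + Bbar (x + (n:ℝ))) :=
          lintegral_const_mul' _ _ ENNReal.ofReal_ne_top
      _ = ENNReal.ofReal (2*M*π) * ∫⁻ x in Set.Ico (0:ℝ) 1,
            ∑ n ∈ s, (2 * Abar (x + (n:ℝ)) + Bbar (x + (n:ℝ))) := by
          rw [Measure.restrict_congr_set Ico_ae_eq_Icc]
      _ = ENNReal.ofReal (2*M*π) * ∫⁻ x in Set.Ico (0:ℝ) 1,
            ∑ n ∈ s, (2 * Atil (x + (n:ℝ)) + Btil (x + (n:ℝ))) := by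
          rw [lintegral_congr_ae bigsum_ae]
      _ = ENNReal.ofReal (2*M*π) * ∑ n ∈ s, ∫⁻ x in Set.Ico (0:ℝ) 1,
            (2 * Atil (x + (n:ℝ)) + Btil (x + (n:ℝ))) := by
          rw [MeasureTheory.lintegral_finset_sum (μ := volume.restrict (Set.Ico (0:ℝ) 1))
            (f := fun (n : ℤ) (x : ℝ) => 2 * Atil (x + (n:ℝ)) + Btil (x + (n:ℝ))) s
            (fun n _ => hKmeas n)]
      _ = ENNReal.ofReal (2*M*π) * ∑ n ∈ s, ∫⁻ X in Set.Ico ((n:ℝ)) ((n:ℝ)+1),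
            (2 * Atil X + Btil X) := by
          congr 1
          exact Finset.sum_congr rfl
            (fun n _ => shift_lintegral (fun X => 2 * Atil X + Btil X) ((n:ℝ)))
      _ = ENNReal.ofReal (2*M*π) * ∫⁻ X in (⋃ n ∈ s, Set.Ico ((n:ℝ)) ((n:ℝ)+1)),
            (2 * Atil X + Btil X) := by
          rw [lintegral_biUnion_finset hdisj (fun n _ => measurableSet_Ico) _]
      _ ≤ ENNReal.ofReal (2*M*π) * ∫⁻ X, (2 * Atil X + Btil X) ∂volume :=
          mul_le_mul_right (lintegral_mono' Measure.restrict_le_self le_rfl) _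
      _ = ENNReal.ofReal (2*M*π) * (2 * J 0 + J 1) := by
          rw [lintegral_add_left (hAtilm.const_mul 2), lintegral_const_mul 2 hAtilm,
            hJ0, hJ1]
  have hIneg : ∀ j : ℕ,
      0 ≤ ∫ x in Set.Icc (0:ℝ) 1, ∫ X : ℝ, ‖iteratedDeriv j (fun y => Γ y X) x‖^2 :=
    fun j => integral_nonneg (fun x => integral_nonneg (fun X => by positivity))
  have hJeq : ∀ j, j ≤ 2 → ENNReal.ofReal (∫ x in Set.Icc (0:ℝ) 1, ∫ X : ℝ,
      ‖iteratedDeriv j (fun y => Γ y X) x‖^2) = J j := by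
    intro j hj
    rw [← MeasureTheory.integral_prod _ (hIntg j hj)]
    exact ofReal_integral_eq_lintegral_ofReal (hIntg j hj)
      (Filter.Eventually.of_forall fun p => by positivity)
  have hsum3 : (∑ j ∈ Finset.range 3,
      ∫ x in Set.Icc (0:ℝ) 1, ∫ X : ℝ, ‖iteratedDeriv j (fun y => Γ y X) x‖^2)
      = (∫ x in Set.Icc (0:ℝ) 1, ∫ X : ℝ, ‖iteratedDeriv 0 (fun y => Γ y X) x‖^2)
        + (∫ x in Set.Icc (0:ℝ) 1, ∫ X : ℝ, ‖iteratedDeriv 1 (fun y => Γ y X) x‖^2)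
        + (∫ x in Set.Icc (0:ℝ) 1, ∫ X : ℝ, ‖iteratedDeriv 2 (fun y => Γ y X) x‖^2) := by
    rw [Finset.sum_range_succ, Finset.sum_range_succ, Finset.sum_range_one]
  calc (∫⁻ x in Set.Icc (0:ℝ) 1, ∫⁻ ζ in Set.Icc (-ζmax) ζmax,
          (‖∑ n ∈ s, Complex.exp (-(Complex.I * (ζ : ℂ) * ((x + n : ℝ) : ℂ)))
            * Γ x (x + n)‖₊ : ℝ≥0∞) ^ 2)
      ≤ ∫⁻ x in Set.Icc (0:ℝ) 1,
          ENNReal.ofReal ((2*M*π) * ∑ n ∈ s, ‖Γ x (x + (n:ℝ))‖^2) :=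
        lintegral_mono (fun x => step1 x)
    _ ≤ ENNReal.ofReal (2*M*π) * (2 * J 0 + J 1) := main2
    _ ≤ ENNReal.ofReal (4*(M*π) * ∑ j ∈ Finset.range 3,
          ∫ x in Set.Icc (0:ℝ) 1, ∫ X : ℝ, ‖iteratedDeriv j (fun y => Γ y X) x‖^2) := by
        have h4 : ENNReal.ofReal (4*((M:ℝ)*π)) = 2 * ENNReal.ofReal (2*(M:ℝ)*π) := by
          rw [show (4*((M:ℝ)*π)) = 2*(2*(M:ℝ)*π) by ring,
            ENNReal.ofReal_mul (by norm_num : (0:ℝ) ≤ 2)]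
          norm_num
        have hR : ENNReal.ofReal (4*((M:ℝ)*π) * ∑ j ∈ Finset.range 3,
              ∫ x in Set.Icc (0:ℝ) 1, ∫ X : ℝ, ‖iteratedDeriv j (fun y => Γ y X) x‖^2)
            = 2 * ENNReal.ofReal (2*(M:ℝ)*π) * (J 0 + (J 1 + J 2)) := by
          rw [hsum3, ENNReal.ofReal_mul (by positivity),
            ENNReal.ofReal_add (add_nonneg (hIneg 0) (hIneg 1)) (hIneg 2),
            ENNReal.ofReal_add (hIneg 0) (hIneg 1),
            hJeq 0 (by norm_num), hJeq 1 (by norm_num), hJeq 2 (by norm_num), h4]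
          ring
        rw [hR]
        calc ENNReal.ofReal (2*(M:ℝ)*π) * (2 * J 0 + J 1)
            ≤ ENNReal.ofReal (2*(M:ℝ)*π) * (2 * (J 0 + (J 1 + J 2))) := by
              refine mul_le_mul_right ?_ _
              calc 2 * J 0 + J 1 ≤ 2 * J 0 + (2 * J 1 + 2 * J 2) := by
                    refine add_le_add_right ?_ _
                    calc J 1 = 1 * J 1 := (one_mul _).symm
                      _ ≤ 2 * J 1 := mul_le_mul_left one_le_two _
                      _ ≤ 2 * J 1 + 2 * J 2 := le_self_add
                _ = 2 * (J 0 + (J 1 + J 2)) := by ring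
          _ = 2 * ENNReal.ofReal (2*(M:ℝ)*π) * (J 0 + (J 1 + J 2)) := by ring
end
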